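/- arXiv:1509.08519 — 4 statements merged into one kernel-verified Lean document; each statement's English description precedes it below -/
import Mathlib

section
/- For every positive random variable X on a probability space such that all moments exist, the function s ↦ λ_s(X) is log-convex: for all real s and t, λ_s · λ_t − (λ_{(s+t)/2})² ≥ 0. -/
open MeasureTheory
open scoped ENNReal NNReal

noncomputable def momF : ℝ → ℝ → ℝ → ℝ := fun m s x =>
  if s = 0 then x / m - 1 - Real.log x + Real.log m
  else if s = 1 then x * Real.log x - x * Real.log m - x + m
  else (x ^ s - m ^ s - s * m ^ (s - 1) * (x - m)) / (s * (s - 1))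

lemma momF_ftc {m x : ℝ} (hm : 0 < m) (hx : 0 < x) (s : ℝ) :
    ∫ u in m..x, (x - u) * u ^ (s - 2) = momF m s x := by
  have hposIcc : ∀ u ∈ Set.uIcc m x, 0 < u := fun u hu =>
    lt_of_lt_of_le (lt_min hm hx) hu.1
  have hcont : IntervalIntegrable (fun u : ℝ => (x - u) * u ^ (s - 2)) volume m x := by
    apply ContinuousOn.intervalIntegrable
    apply ContinuousOn.mul (by fun_prop)
    exact fun u hu => (Real.continuousAt_rpow_const u (s-2)
      (Or.inl (hposIcc u hu).ne')).continuousWithinAt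
  by_cases h0 : s = 0
  · subst h0
    have key := intervalIntegral.integral_eq_sub_of_hasDerivAt
      (f := fun u : ℝ => -(x * u⁻¹) - Real.log u)
      (f' := fun u : ℝ => (x - u) * u ^ ((0:ℝ) - 2)) (a := m) (b := x) ?_ hcont
    · rw [key]; simp only [momF, ↓reduceIte]; field_simp; ring
    · intro u hu
      have hu0 : (0:ℝ) < u := hposIcc u hu
      have hd := (((hasDerivAt_inv hu0.ne').const_mul x).neg.sub
        (Real.hasDerivAt_log hu0.ne'))
      have h2 : u ^ ((0:ℝ) - 2) = (u ^ 2)⁻¹ := by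
        rw [show (0:ℝ) - 2 = -(2:ℝ) by norm_num, Real.rpow_neg hu0.le, Real.rpow_two]
      refine hd.congr_deriv ?_
      show _ = (x - u) * u ^ ((0:ℝ) - 2)
      rw [h2]; field_simp
  by_cases h1 : s = 1
  · subst h1
    have key := intervalIntegral.integral_eq_sub_of_hasDerivAt
      (f := fun u : ℝ => x * Real.log u - u)
      (f' := fun u : ℝ => (x - u) * u ^ ((1:ℝ) - 2)) (a := m) (b := x) ?_ hcont
    · rw [key]; norm_num [momF]; ring
    · intro u hu
      have hu0 : (0:ℝ) < u := hposIcc u hu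
      have hd := ((Real.hasDerivAt_log hu0.ne').const_mul x).sub (hasDerivAt_id u)
      have h2 : u ^ ((1:ℝ) - 2) = u⁻¹ := by
        rw [show (1:ℝ) - 2 = -(1:ℝ) by norm_num, Real.rpow_neg hu0.le, Real.rpow_one]
      refine hd.congr_deriv ?_
      show _ = (x - u) * u ^ ((1:ℝ) - 2)
      rw [h2]; field_simp
  · have hs0 : s ≠ 0 := h0
    have hs1 : s - 1 ≠ 0 := sub_ne_zero.2 h1
    have key := intervalIntegral.integral_eq_sub_of_hasDerivAt
      (f := fun u : ℝ => x * u ^ (s - 1) / (s - 1) - u ^ s / s)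
      (f' := fun u : ℝ => (x - u) * u ^ (s - 2)) (a := m) (b := x) ?_ hcont
    · rw [key]; simp only [momF, if_neg h0, if_neg h1]
      have hxs : x ^ s = x * x ^ (s - 1) := by
        rw [show s = 1 + (s-1) by ring, Real.rpow_add hx, Real.rpow_one]; ring_nf
      have hms : m ^ s = m * m ^ (s - 1) := by
        rw [show s = 1 + (s-1) by ring, Real.rpow_add hm, Real.rpow_one]; ring_nf
      rw [hxs, hms]; field_simp; ring
    · intro u hu
      have hu0 : (0:ℝ) < u := hposIcc u hu
      have hd1 : HasDerivAt (fun u : ℝ => u ^ (s - 1)) ((s - 1) * u ^ (s - 1 - 1)) u :=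
        Real.hasDerivAt_rpow_const (Or.inl hu0.ne')
      have hd2 : HasDerivAt (fun u : ℝ => u ^ s) (s * u ^ (s - 1)) u :=
        Real.hasDerivAt_rpow_const (Or.inl hu0.ne')
      refine (((hd1.const_mul x).div_const (s-1)).sub (hd2.div_const s)).congr_deriv ?_
      have h2 : u ^ (s - 1) = u ^ (s - 2) * u := by
        rw [← Real.rpow_add_one hu0.ne']; ring_nf
      rw [show s - 1 - 1 = s - 2 by ring]
      field_simp [h2]; ring_nf
      rw [show (-1 + s) = (-2 + s) + 1 by ring, Real.rpow_add_one hu0.ne']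

lemma momF_integrableOn {m x : ℝ} (hm : 0 < m) (hx : 0 < x) (s : ℝ) :
    IntegrableOn (fun u : ℝ => |x - u| * u ^ (s - 2))
      (Set.Ioc (min m x) (max m x)) volume := by
  have h0 : 0 < min m x := lt_min hm hx
  have hc : ContinuousOn (fun u : ℝ => |x - u| * u ^ (s - 2))
      (Set.Icc (min m x) (max m x)) := by
    apply ContinuousOn.mul (by fun_prop)
    intro u hu
    exact (Real.continuousAt_rpow_const u (s-2)
      (Or.inl (lt_of_lt_of_le h0 hu.1).ne')).continuousWithinAt
  exact (hc.integrableOn_Icc).mono_set Set.Ioc_subset_Icc_self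

lemma momF_eq_setIntegral {m x : ℝ} (hm : 0 < m) (hx : 0 < x) (s : ℝ) :
    momF m s x = ∫ u in Set.Ioc (min m x) (max m x), |x - u| * u ^ (s - 2) := by
  rcases le_total m x with h | h
  · rw [min_eq_left h, max_eq_right h, ← momF_ftc hm hx s,
      intervalIntegral.integral_of_le h]
    refine setIntegral_congr_fun measurableSet_Ioc (fun u hu => ?_)
    rw [abs_of_nonneg (sub_nonneg.2 hu.2)]
  · rw [min_eq_right h, max_eq_left h, ← momF_ftc hm hx s,
      intervalIntegral.integral_symm, intervalIntegral.integral_of_le h, ← integral_neg]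
    refine setIntegral_congr_fun measurableSet_Ioc (fun u hu => ?_)
    rw [abs_of_nonpos (sub_nonpos.2 hu.1.le)]
    ring

lemma momF_nonneg {m x : ℝ} (hm : 0 < m) (hx : 0 < x) (s : ℝ) : 0 ≤ momF m s x := by
  rw [momF_eq_setIntegral hm hx s]
  refine setIntegral_nonneg measurableSet_Ioc (fun u hu => ?_)
  exact mul_nonneg (abs_nonneg _)
    (Real.rpow_nonneg (lt_of_lt_of_le (lt_min hm hx) hu.1.le).le _)

lemma momF_lintegral {m x : ℝ} (hm : 0 < m) (hx : 0 < x) (s : ℝ) :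
    ∫⁻ u in Set.Ioc (min m x) (max m x),
        ENNReal.ofReal |x - u| * ENNReal.ofReal u ^ (s - 2)
      = ENNReal.ofReal (momF m s x) := by
  have hnn : 0 ≤ᵐ[volume.restrict (Set.Ioc (min m x) (max m x))]
      fun u : ℝ => |x - u| * u ^ (s - 2) := by
    refine (ae_restrict_iff' measurableSet_Ioc).2 (Filter.Eventually.of_forall
      fun u hu => mul_nonneg (abs_nonneg _)
        (Real.rpow_nonneg (lt_of_lt_of_le (lt_min hm hx) hu.1.le).le _))
  rw [momF_eq_setIntegral hm hx s,
    MeasureTheory.ofReal_integral_eq_lintegral_ofReal (momF_integrableOn hm hx s) hnn]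
  refine setLIntegral_congr_fun measurableSet_Ioc (
    (fun u hu => ?_))
  have hu0 : 0 < u := lt_of_lt_of_le (lt_min hm hx) hu.1.le
  beta_reduce
  rw [ENNReal.ofReal_mul (abs_nonneg _), ENNReal.ofReal_rpow_of_pos hu0]

/-- The moment difference `λ_s(X)` of a positive random variable `X`. -/
noncomputable def momentLambda {Ω : Type*} [MeasurableSpace Ω] (μ : Measure Ω) (X : Ω → ℝ)
    (s : ℝ) : ℝ :=
  if s = 0 then Real.log (∫ ω, X ω ∂μ) - ∫ ω, Real.log (X ω) ∂μ
  else if s = 1 then (∫ ω, X ω * Real.log (X ω) ∂μ) - (∫ ω, X ω ∂μ) * Real.log (∫ ω, X ω ∂μ)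
  else ((∫ ω, X ω ^ s ∂μ) - (∫ ω, X ω ∂μ) ^ s) / (s * (s - 1))

section Core

variable {Ω : Type*} [MeasurableSpace Ω] (μ : Measure Ω) [IsProbabilityMeasure μ]
  (X : Ω → ℝ)

lemma momF_comp_integrable (hX : Measurable X) (hposAll : ∀ ω, 0 < X ω)
    (hmom : ∀ s : ℝ, Integrable (fun ω => X ω ^ s) μ)
    (hlog : Integrable (fun ω => Real.log (X ω)) μ)
    (hxlog : Integrable (fun ω => X ω * Real.log (X ω)) μ) (s : ℝ) :
    Integrable (fun ω => momF (∫ ω, X ω ∂μ) s (X ω)) μ := by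
  have hint : Integrable X μ := by simpa using hmom 1
  by_cases h0 : s = 0
  · subst h0
    simp only [momF, if_pos rfl]
    exact (((hint.div_const _).sub (integrable_const 1)).sub hlog).add (integrable_const _)
  by_cases h1 : s = 1
  · subst h1
    simp only [momF, if_neg one_ne_zero, if_pos rfl]
    exact ((hxlog.sub (hint.mul_const _)).sub hint).add (integrable_const _)
  · simp only [momF, if_neg h0, if_neg h1]
    exact ((((hmom s).sub (integrable_const _)).sub
      ((hint.sub (integrable_const _)).const_mul _)).div_const _)

lemma integral_momF (hX : Measurable X) (hposAll : ∀ ω, 0 < X ω)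
    (hmom : ∀ s : ℝ, Integrable (fun ω => X ω ^ s) μ)
    (hlog : Integrable (fun ω => Real.log (X ω)) μ)
    (hxlog : Integrable (fun ω => X ω * Real.log (X ω)) μ)
    (hm : 0 < ∫ ω, X ω ∂μ) (s : ℝ) :
    ∫ ω, momF (∫ ω, X ω ∂μ) s (X ω) ∂μ = momentLambda μ X s := by
  have hint : Integrable X μ := by simpa using hmom 1
  set m := ∫ ω, X ω ∂μ with hmdef
  by_cases h0 : s = 0
  · subst h0
    simp only [momF, momentLambda, if_pos rfl, if_true]
    have I1 : Integrable (fun ω => X ω / m) μ := hint.div_const _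
    have I2 : Integrable (fun ω => X ω / m - 1) μ := I1.sub (integrable_const 1)
    have I3 : Integrable (fun ω => X ω / m - 1 - Real.log (X ω)) μ := I2.sub hlog
    rw [integral_add I3 (integrable_const _), integral_sub I2 hlog,
      integral_sub I1 (integrable_const 1), integral_div, integral_const, integral_const]
    simp only [← hmdef, measure_univ, probReal_univ, smul_eq_mul, one_mul]
    rw [div_self hm.ne']
    ring
  by_cases h1 : s = 1
  · subst h1
    simp only [momF, momentLambda, if_neg one_ne_zero, if_pos rfl, if_true]
    have I1 : Integrable (fun ω => X ω * Real.log (X ω) - X ω * Real.log m) μ :=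
      hxlog.sub (hint.mul_const _)
    have I2 : Integrable (fun ω => X ω * Real.log (X ω) - X ω * Real.log m - X ω) μ :=
      I1.sub hint
    rw [integral_add I2 (integrable_const _), integral_sub I1 hint,
      integral_sub hxlog (hint.mul_const _), integral_mul_const, integral_const]
    simp [← hmdef]
  · simp only [momF, momentLambda, if_neg h0, if_neg h1]
    have I1 : Integrable (fun ω => X ω ^ s - m ^ s) μ := (hmom s).sub (integrable_const _)
    have I2 : Integrable (fun ω => s * m ^ (s - 1) * (X ω - m)) μ :=
      (hint.sub (integrable_const _)).const_mul _
    rw [integral_div, integral_sub I1 I2, integral_sub (hmom s) (integrable_const _),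
      integral_const_mul, integral_sub hint (integrable_const _), integral_const,
      integral_const]
    simp [← hmdef]


lemma lambda_log_convex_aux (hX : Measurable X) (hposAll : ∀ ω, 0 < X ω)
    (hmom : ∀ s : ℝ, Integrable (fun ω => X ω ^ s) μ)
    (hlog : Integrable (fun ω => Real.log (X ω)) μ)
    (hxlog : Integrable (fun ω => X ω * Real.log (X ω)) μ)
    (s t : ℝ) :
    momentLambda μ X s * momentLambda μ X t - (momentLambda μ X ((s + t) / 2)) ^ 2 ≥ 0 := by
  have hint : Integrable X μ := by simpa using hmom 1
  have hm : 0 < ∫ ω, X ω ∂μ := by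
    rw [integral_pos_iff_support_of_nonneg_ae
      (Filter.Eventually.of_forall fun ω => (hposAll ω).le) hint]
    have : Function.support X = Set.univ :=
      Set.eq_univ_of_forall fun ω => (hposAll ω).ne'
    simp [this]
  set m := ∫ ω, X ω ∂μ with hmdef
  set r := (s + t) / 2 with hrdef
  -- nonnegativity of momentLambda values
  have hlam : ∀ a : ℝ, momentLambda μ X a = ∫ ω, momF m a (X ω) ∂μ :=
    fun a => (integral_momF μ X hX hposAll hmom hlog hxlog hm a).symm
  have hlam_nn : ∀ a : ℝ, 0 ≤ momentLambda μ X a := by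
    intro a
    rw [hlam a]
    exact integral_nonneg fun ω => momF_nonneg hm (hposAll ω) a
  -- the kernel
  set S : Set (Ω × ℝ) := {p | min m (X p.1) < p.2} ∩ {p | p.2 ≤ max m (X p.1)} with hSdef
  have hS : MeasurableSet S :=
    (measurableSet_lt (measurable_const.min (hX.comp measurable_fst)) measurable_snd).inter
      (measurableSet_le measurable_snd (measurable_const.max (hX.comp measurable_fst)))
  set W : Ω × ℝ → ℝ≥0∞ := S.indicator (fun p => ENNReal.ofReal |X p.1 - p.2|) with hWdef
  have hW : Measurable W :=
    Measurable.indicator (((hX.comp measurable_fst).sub measurable_snd).abs.ennreal_ofReal) hS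
  have hmemS : ∀ p : Ω × ℝ, p ∈ S ↔ p.2 ∈ Set.Ioc (min m (X p.1)) (max m (X p.1)) := by
    intro p
    simp [hSdef, Set.mem_Ioc]
  set L : ℝ → (Ω × ℝ) → ℝ≥0∞ :=
    fun a p => W p * ENNReal.ofReal p.2 ^ (a - 2) with hLdef
  have hLmeas : ∀ a : ℝ, Measurable (L a) :=
    fun a => hW.mul (measurable_snd.ennreal_ofReal.pow_const _)
  -- key identity
  have key : ∀ a : ℝ, ∫⁻ p, L a p ∂(μ.prod volume) = ENNReal.ofReal (momentLambda μ X a) := by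
    intro a
    rw [MeasureTheory.lintegral_prod _ (hLmeas a).aemeasurable]
    have inner : ∀ ω, (∫⁻ u, L a (ω, u)) = ENNReal.ofReal (momF m a (X ω)) := by
      intro ω
      have hx := hposAll ω
      have e1 : (fun u : ℝ => L a (ω, u)) =
          (Set.Ioc (min m (X ω)) (max m (X ω))).indicator
            (fun u => ENNReal.ofReal |X ω - u| * ENNReal.ofReal u ^ (a - 2)) := by
        funext u
        by_cases h : u ∈ Set.Ioc (min m (X ω)) (max m (X ω))
        · rw [Set.indicator_of_mem h]
          have hmem : ((ω, u) : Ω × ℝ) ∈ S := (hmemS (ω, u)).2 h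
          simp only [hLdef, hWdef, Set.indicator_of_mem hmem]
        · rw [Set.indicator_of_notMem h]
          have hmem : ((ω, u) : Ω × ℝ) ∉ S := fun hc => h ((hmemS (ω, u)).1 hc)
          simp only [hLdef, hWdef, Set.indicator_of_notMem hmem, zero_mul]
      rw [e1, lintegral_indicator measurableSet_Ioc, momF_lintegral hm hx a]
    rw [lintegral_congr inner, ← MeasureTheory.ofReal_integral_eq_lintegral_ofReal
      (momF_comp_integrable μ X hX hposAll hmom hlog hxlog a)
      (Filter.Eventually.of_forall fun ω => momF_nonneg hm (hposAll ω) a),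
      integral_momF μ X hX hposAll hmom hlog hxlog hm a]
  -- Hölder
  set f : (Ω × ℝ) → ℝ≥0∞ :=
    fun p => W p ^ (2:ℝ)⁻¹ * ENNReal.ofReal p.2 ^ ((s - 2) / 2) with hfdef
  set g : (Ω × ℝ) → ℝ≥0∞ :=
    fun p => W p ^ (2:ℝ)⁻¹ * ENNReal.ofReal p.2 ^ ((t - 2) / 2) with hgdef
  have hfm : Measurable f := (hW.pow_const _).mul (measurable_snd.ennreal_ofReal.pow_const _)
  have hgm : Measurable g := (hW.pow_const _).mul (measurable_snd.ennreal_ofReal.pow_const _)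
  have hfg : ∀ p, f p * g p = L r p := by
    intro p
    by_cases hp : p ∈ S
    · have hp2 : 0 < p.2 := lt_trans (lt_min hm (hposAll p.1)) ((hmemS p).1 hp).1
      have hA0 : ENNReal.ofReal p.2 ≠ 0 := (ENNReal.ofReal_pos.2 hp2).ne'
      have hAt : ENNReal.ofReal p.2 ≠ ⊤ := ENNReal.ofReal_ne_top
      simp only [hLdef, hfdef, hgdef]
      rw [mul_mul_mul_comm, ← ENNReal.rpow_add_of_nonneg _ _ (by norm_num) (by norm_num),
        ← ENNReal.rpow_add _ _ hA0 hAt]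
      norm_num
      rw [show (s - 2) / 2 + (t - 2) / 2 = r - 2 by rw [hrdef]; ring]
    · have hW0 : W p = 0 := Set.indicator_of_notMem hp _
      simp [hLdef, hfdef, hgdef, hW0,
        ENNReal.zero_rpow_of_pos (by norm_num : (0:ℝ) < (2:ℝ)⁻¹)]
  have hf2 : ∀ p, f p ^ (2:ℝ) = L s p := by
    intro p
    simp only [hfdef, hLdef]
    rw [ENNReal.mul_rpow_of_nonneg _ _ (by norm_num : (0:ℝ) ≤ 2),
      ← ENNReal.rpow_mul, ← ENNReal.rpow_mul]
    norm_num
  have hg2 : ∀ p, g p ^ (2:ℝ) = L t p := by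
    intro p
    simp only [hgdef, hLdef]
    rw [ENNReal.mul_rpow_of_nonneg _ _ (by norm_num : (0:ℝ) ≤ 2),
      ← ENNReal.rpow_mul, ← ENNReal.rpow_mul]
    norm_num
  have conj : Real.HolderConjugate 2 2 := Real.HolderConjugate.two_two
  have H := ENNReal.lintegral_mul_le_Lp_mul_Lq (μ.prod volume) conj
    hfm.aemeasurable hgm.aemeasurable
  rw [show (fun a => (f * g) a) = L r by funext p; exact hfg p] at H
  simp only [hf2, hg2] at H
  rw [key r, key s, key t] at H
  -- conclude
  have hfin : ENNReal.ofReal ((momentLambda μ X r) ^ 2)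
      ≤ ENNReal.ofReal (momentLambda μ X s * momentLambda μ X t) := by
    calc ENNReal.ofReal ((momentLambda μ X r) ^ 2)
        = ENNReal.ofReal (momentLambda μ X r) ^ (2:ℝ) := by
          rw [ENNReal.ofReal_pow (hlam_nn r), ENNReal.rpow_two]
      _ ≤ (ENNReal.ofReal (momentLambda μ X s) ^ (1/(2:ℝ)) *
            ENNReal.ofReal (momentLambda μ X t) ^ (1/(2:ℝ))) ^ (2:ℝ) :=
          ENNReal.rpow_le_rpow H (by norm_num)
      _ = ENNReal.ofReal (momentLambda μ X s) * ENNReal.ofReal (momentLambda μ X t) := by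
          rw [ENNReal.mul_rpow_of_nonneg _ _ (by norm_num : (0:ℝ) ≤ 2),
            ← ENNReal.rpow_mul, ← ENNReal.rpow_mul]
          norm_num
      _ = ENNReal.ofReal (momentLambda μ X s * momentLambda μ X t) :=
          (ENNReal.ofReal_mul (hlam_nn s)).symm
  have : (momentLambda μ X r) ^ 2 ≤ momentLambda μ X s * momentLambda μ X t :=
    (ENNReal.ofReal_le_ofReal_iff (mul_nonneg (hlam_nn s) (hlam_nn t))).1 hfin
  linarith

end Core


theorem lambda_log_convex {Ω : Type*} [MeasurableSpace Ω] (μ : Measure Ω) [IsProbabilityMeasure μ]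
    (X : Ω → ℝ) (hX : Measurable X) (hpos : ∀ᵐ ω ∂μ, 0 < X ω)
    (hmom : ∀ s : ℝ, Integrable (fun ω => X ω ^ s) μ)
    (hlog : Integrable (fun ω => Real.log (X ω)) μ)
    (hxlog : Integrable (fun ω => X ω * Real.log (X ω)) μ)
    (s t : ℝ) :
    momentLambda μ X s * momentLambda μ X t - (momentLambda μ X ((s + t) / 2)) ^ 2 ≥ 0 := by
  set X' : Ω → ℝ := fun ω => if 0 < X ω then X ω else 1 with hX'def
  have hX' : Measurable X' :=
    Measurable.ite (measurableSet_lt measurable_const hX) hX measurable_const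
  have hpos' : ∀ ω, 0 < X' ω := by
    intro ω
    by_cases h : 0 < X ω <;> simp [hX'def, h]
  have hae : X =ᵐ[μ] X' := hpos.mono fun ω h => by simp [hX'def, if_pos h]
  have e0 : ∫ ω, X ω ∂μ = ∫ ω, X' ω ∂μ := integral_congr_ae hae
  have eL : ∫ ω, Real.log (X ω) ∂μ = ∫ ω, Real.log (X' ω) ∂μ :=
    integral_congr_ae (hae.mono fun ω h => by simp only [h])
  have eXL : ∫ ω, X ω * Real.log (X ω) ∂μ = ∫ ω, X' ω * Real.log (X' ω) ∂μ :=
    integral_congr_ae (hae.mono fun ω h => by simp only [h])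
  have eS : ∀ a : ℝ, ∫ ω, X ω ^ a ∂μ = ∫ ω, X' ω ^ a ∂μ :=
    fun a => integral_congr_ae (hae.mono fun ω h => by simp only [h])
  have hml : ∀ a : ℝ, momentLambda μ X a = momentLambda μ X' a := by
    intro a
    unfold momentLambda
    rw [e0, eL, eXL, eS a]
  rw [hml s, hml t, hml ((s + t) / 2)]
  exact lambda_log_convex_aux μ X' hX' hpos'
    (fun a => (hmom a).congr (hae.mono fun ω h => by simp only [h]))
    (hlog.congr (hae.mono fun ω h => by simp only [h]))
    (hxlog.congr (hae.mono fun ω h => by simp only [h])) s t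
end

section
/- (Theorem B, mixed Jensen–Lyapunov moment inequality) For every positive random variable X on a probability space such that all moments exist, and for all real numbers r < s < t, one has (λ_s)^{t−r} ≤ (λ_r)^{t−s} · (λ_t)^{s−r}, where the powers are real powers of the nonnegative quantities λ_r, λ_s, λ_t. -/
open MeasureTheory Real Set intervalIntegral
open scoped ENNReal NNReal

noncomputable def kern (m x u : ℝ) : ℝ :=
  max (x - u) 0 - max (m - u) 0 - if u < m then x - m else 0

noncomputable def Phi (m s x : ℝ) : ℝ :=
  if s = 0 then Real.log m - Real.log x + (x - m) / m
  else if s = 1 then x * Real.log x - x * Real.log m - (x - m)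
  else (x ^ s - m ^ s - s * m ^ (s - 1) * (x - m)) / (s * (s - 1))

lemma Phi_zero (m x : ℝ) : Phi m 0 x = Real.log m - Real.log x + (x - m) / m := by
  simp [Phi]

lemma Phi_one (m x : ℝ) : Phi m 1 x = x * Real.log x - x * Real.log m - (x - m) := by
  simp [Phi]

lemma Phi_of_ne {s : ℝ} (h0 : s ≠ 0) (h1 : s ≠ 1) (m x : ℝ) :
    Phi m s x = (x ^ s - m ^ s - s * m ^ (s - 1) * (x - m)) / (s * (s - 1)) := by
  simp [Phi, h0, h1]

lemma kern_nonneg (m x u : ℝ) : 0 ≤ kern m x u := by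
  unfold kern
  rcases le_total (x - u) 0 with h1 | h1 <;> rcases le_total (m - u) 0 with h2 | h2 <;>
    split_ifs with h3 <;>
    simp only [max_eq_right h1, max_eq_left h1, max_eq_right h2, max_eq_left h2] <;> linarith

lemma kern_eq_indicator_of_le {m x : ℝ} (h : m ≤ x) :
    kern m x = (Set.Icc m x).indicator (fun u => x - u) := by
  funext u
  unfold kern
  rcases lt_or_ge u m with h1 | h1
  · rw [if_pos h1, Set.indicator_of_notMem (by simp [Set.mem_Icc]; intro h2; linarith),
      max_eq_left (by linarith), max_eq_left (by linarith)]
    ring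
  · rw [if_neg (not_lt.mpr h1)]
    rcases le_or_gt u x with h2 | h2
    · rw [Set.indicator_of_mem (Set.mem_Icc.mpr ⟨h1, h2⟩), max_eq_left (by linarith), max_eq_right (by linarith)]
      ring
    · rw [Set.indicator_of_notMem (by simp [Set.mem_Icc]; intro h3; linarith),
        max_eq_right (by linarith), max_eq_right (by linarith)]
      ring

lemma kern_eq_indicator_of_ge {m x : ℝ} (h : x ≤ m) :
    kern m x = (Set.Ico x m).indicator (fun u => u - x) := by
  funext u
  unfold kern
  rcases lt_or_ge u x with h1 | h1
  · rw [if_pos (by linarith), Set.indicator_of_notMem (by simp [Set.mem_Ico]; intro h2; linarith),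
      max_eq_left (by linarith), max_eq_left (by linarith)]
    ring
  · rcases lt_or_ge u m with h2 | h2
    · rw [if_pos h2, Set.indicator_of_mem (Set.mem_Ico.mpr ⟨h1, h2⟩), max_eq_right (by linarith),
        max_eq_left (by linarith)]
      ring
    · rw [if_neg (not_lt.mpr h2), Set.indicator_of_notMem (by simp [Set.mem_Ico]; intro h3; linarith),
        max_eq_right (by linarith), max_eq_right (by linarith)]
      ring

lemma F_eval {m x : ℝ} (hm : 0 < m) (hx : 0 < x) (s : ℝ) :
    ∫ u in m..x, (x - u) * u ^ (s - 2) = Phi m s x := by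
  unfold Phi

  have hz : (0:ℝ) ∉ Set.uIcc m x := notMem_uIcc_of_lt hm hx
  have hpos : ∀ u ∈ Set.uIcc m x, 0 < u := by
    intro u hu
    rcases le_total m x with h | h
    · rw [Set.uIcc_of_le h] at hu; exact lt_of_lt_of_le hm hu.1
    · rw [Set.uIcc_of_ge h] at hu; exact lt_of_lt_of_le hx hu.1
  have hsplit : ∫ u in m..x, (x - u) * u ^ (s - 2)
      = x * (∫ u in m..x, u ^ (s - 2)) - ∫ u in m..x, u ^ (s - 1) := by
    rw [← intervalIntegral.integral_const_mul,
      ← intervalIntegral.integral_sub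
        ((intervalIntegrable_rpow (Or.inr hz)).const_mul x)
        (intervalIntegrable_rpow (Or.inr hz))]
    apply intervalIntegral.integral_congr
    intro u hu
    have hu0 : 0 < u := hpos u hu
    show (x - u) * u ^ (s - 2) = x * u ^ (s - 2) - u ^ (s - 1)
    rw [show s - 1 = s - 2 + 1 by ring, Real.rpow_add hu0, Real.rpow_one]
    ring
  rw [hsplit]
  by_cases hs0 : s = 0
  · subst hs0
    rw [if_pos rfl]
    have h1 : ∫ u in m..x, u ^ ((0:ℝ) - 2) = (x ^ ((0:ℝ) - 2 + 1) - m ^ ((0:ℝ) - 2 + 1)) / ((0:ℝ) - 2 + 1) :=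
      integral_rpow (Or.inr ⟨by norm_num, hz⟩)
    have h2 : ∫ u in m..x, u ^ ((0:ℝ) - 1) = Real.log x - Real.log m := by
      have : ∀ u ∈ Set.uIcc m x, u ^ ((0:ℝ) - 1) = u⁻¹ := by
        intro u hu; rw [show (0:ℝ) - 1 = -1 by ring, Real.rpow_neg_one]
      rw [intervalIntegral.integral_congr this, integral_inv hz,
        Real.log_div hx.ne' hm.ne']
    rw [h1, h2]
    have hxm : x ^ ((0:ℝ) - 2 + 1) = x⁻¹ := by
      rw [show (0:ℝ) - 2 + 1 = -1 by ring, Real.rpow_neg_one]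
    have hmm : m ^ ((0:ℝ) - 2 + 1) = m⁻¹ := by
      rw [show (0:ℝ) - 2 + 1 = -1 by ring, Real.rpow_neg_one]
    rw [hxm, hmm]
    field_simp
    ring
  by_cases hs1 : s = 1
  · subst hs1
    rw [if_neg hs0, if_pos rfl]
    have h1 : ∫ u in m..x, u ^ ((1:ℝ) - 2) = Real.log x - Real.log m := by
      have : ∀ u ∈ Set.uIcc m x, u ^ ((1:ℝ) - 2) = u⁻¹ := by
        intro u hu; rw [show (1:ℝ) - 2 = -1 by ring, Real.rpow_neg_one]
      rw [intervalIntegral.integral_congr this, integral_inv hz,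
        Real.log_div hx.ne' hm.ne']
    have h2 : ∫ u in m..x, u ^ ((1:ℝ) - 1) = x - m := by
      have : ∀ u ∈ Set.uIcc m x, u ^ ((1:ℝ) - 1) = 1 := by
        intro u hu; rw [show (1:ℝ) - 1 = 0 by ring, Real.rpow_zero]
      rw [intervalIntegral.integral_congr this]
      simp
    rw [h1, h2]
    ring
  · rw [if_neg hs0, if_neg hs1]
    have hs1' : s - 1 ≠ 0 := sub_ne_zero.mpr hs1
    have hs0' : s ≠ 0 := hs0
    have h1 : ∫ u in m..x, u ^ (s - 2) = (x ^ (s - 1) - m ^ (s - 1)) / (s - 1) := by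
      rw [integral_rpow (Or.inr ⟨by intro hc; apply hs1; linarith, hz⟩),
        show s - 2 + 1 = s - 1 by ring]
    have h2 : ∫ u in m..x, u ^ (s - 1) = (x ^ s - m ^ s) / s := by
      rw [integral_rpow (Or.inr ⟨by intro hc; apply hs0; linarith, hz⟩),
        show s - 1 + 1 = s by ring]
    rw [h1, h2]
    have hxs : x ^ (s - 1) = x ^ s / x := by rw [Real.rpow_sub hx, Real.rpow_one]
    have hms : m ^ (s - 1) = m ^ s / m := by rw [Real.rpow_sub hm, Real.rpow_one]
    rw [hxs, hms]
    field_simp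
    ring

lemma Phi_nonneg {m x : ℝ} (hm : 0 < m) (hx : 0 < x) (s : ℝ) : 0 ≤ Phi m s x := by
  rw [← F_eval hm hx s]
  rcases le_total m x with h | h
  · apply intervalIntegral.integral_nonneg h
    intro u hu
    have hu0 : 0 < u := lt_of_lt_of_le hm hu.1
    exact mul_nonneg (by linarith [hu.2]) (Real.rpow_nonneg hu0.le _)
  · have h1 : (0:ℝ) ≤ ∫ u in x..m, (u - x) * u ^ (s - 2) := by
      apply intervalIntegral.integral_nonneg h
      intro u hu
      have hu0 : 0 < u := lt_of_lt_of_le hx hu.1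
      exact mul_nonneg (by linarith [hu.1]) (Real.rpow_nonneg hu0.le _)
    have h2 : ∫ u in x..m, (u - x) * u ^ (s - 2) = -∫ u in m..x, (u - x) * u ^ (s - 2) :=
      intervalIntegral.integral_symm m x
    have h3 : ∫ u in m..x, (u - x) * u ^ (s - 2) = -∫ u in m..x, (x - u) * u ^ (s - 2) := by
      rw [← intervalIntegral.integral_neg]
      apply intervalIntegral.integral_congr
      intro u hu
      show (u - x) * u ^ (s - 2) = -((x - u) * u ^ (s - 2))
      ring
    rw [h2, h3] at h1
    linarith

lemma lintegral_kern {m x : ℝ} (hm : 0 < m) (hx : 0 < x) (s : ℝ) :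
    ∫⁻ u in Set.Ioi (0:ℝ), ENNReal.ofReal (kern m x u * u ^ (s - 2)) =
      ENNReal.ofReal (Phi m s x) := by
  have hnn : 0 ≤ᵐ[volume.restrict (Set.Ioi (0:ℝ))] fun u => kern m x u * u ^ (s - 2) := by
    filter_upwards [ae_restrict_mem measurableSet_Ioi] with u hu
    exact mul_nonneg (kern_nonneg m x u) (Real.rpow_nonneg (le_of_lt hu) _)
  rcases le_total m x with hmx | hmx
  · have heq : (fun u => kern m x u * u ^ (s - 2))
        = (Set.Icc m x).indicator (fun u => (x - u) * u ^ (s - 2)) := by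
      funext u
      rw [kern_eq_indicator_of_le hmx]
      by_cases hu : u ∈ Set.Icc m x
      · rw [Set.indicator_of_mem hu, Set.indicator_of_mem hu]
      · rw [Set.indicator_of_notMem hu, Set.indicator_of_notMem hu, zero_mul]
    have hcont : ContinuousOn (fun u : ℝ => (x - u) * u ^ (s - 2)) (Set.Icc m x) := by
      apply ContinuousOn.mul ((continuous_const.sub continuous_id).continuousOn)
      apply ContinuousOn.rpow_const continuousOn_id
      intro u hu
      exact Or.inl (ne_of_gt (lt_of_lt_of_le hm hu.1))
    have hIcc : IntegrableOn (fun u : ℝ => (x - u) * u ^ (s - 2)) (Set.Icc m x) :=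
      hcont.integrableOn_Icc
    have hind : Integrable ((Set.Icc m x).indicator fun u : ℝ => (x - u) * u ^ (s - 2)) :=
      (integrable_indicator_iff measurableSet_Icc).mpr hIcc
    have hInt : IntegrableOn (fun u => kern m x u * u ^ (s - 2)) (Set.Ioi (0:ℝ)) := by
      rw [heq]; exact hind.integrableOn
    rw [← ofReal_integral_eq_lintegral_ofReal hInt hnn]
    congr 1
    rw [← F_eval hm hx s]
    calc ∫ u in Set.Ioi (0:ℝ), kern m x u * u ^ (s - 2)
        = ∫ u in Set.Ioi (0:ℝ), (Set.Icc m x).indicator (fun u => (x - u) * u ^ (s - 2)) u := by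
          rw [heq]
      _ = ∫ u in Set.Ioi (0:ℝ) ∩ Set.Icc m x, (x - u) * u ^ (s - 2) :=
          setIntegral_indicator measurableSet_Icc
      _ = ∫ u in Set.Icc m x, (x - u) * u ^ (s - 2) := by
          rw [Set.inter_eq_self_of_subset_right (show Set.Icc m x ⊆ Set.Ioi 0 from fun u hu => lt_of_lt_of_le hm hu.1)]
      _ = ∫ u in Set.Ioc m x, (x - u) * u ^ (s - 2) := integral_Icc_eq_integral_Ioc
      _ = ∫ u in m..x, (x - u) * u ^ (s - 2) := (intervalIntegral.integral_of_le hmx).symm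
  · have heq : (fun u => kern m x u * u ^ (s - 2))
        = (Set.Ico x m).indicator (fun u => (u - x) * u ^ (s - 2)) := by
      funext u
      rw [kern_eq_indicator_of_ge hmx]
      by_cases hu : u ∈ Set.Ico x m
      · rw [Set.indicator_of_mem hu, Set.indicator_of_mem hu]
      · rw [Set.indicator_of_notMem hu, Set.indicator_of_notMem hu, zero_mul]
    have hcont : ContinuousOn (fun u : ℝ => (u - x) * u ^ (s - 2)) (Set.Icc x m) := by
      apply ContinuousOn.mul ((continuous_id.sub continuous_const).continuousOn)
      apply ContinuousOn.rpow_const continuousOn_id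
      intro u hu
      exact Or.inl (ne_of_gt (lt_of_lt_of_le hx hu.1))
    have hIco : IntegrableOn (fun u : ℝ => (u - x) * u ^ (s - 2)) (Set.Ico x m) :=
      (hcont.integrableOn_Icc).mono_set Set.Ico_subset_Icc_self
    have hind : Integrable ((Set.Ico x m).indicator fun u : ℝ => (u - x) * u ^ (s - 2)) :=
      (integrable_indicator_iff measurableSet_Ico).mpr hIco
    have hInt : IntegrableOn (fun u => kern m x u * u ^ (s - 2)) (Set.Ioi (0:ℝ)) := by
      rw [heq]; exact hind.integrableOn
    rw [← ofReal_integral_eq_lintegral_ofReal hInt hnn]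
    congr 1
    rw [← F_eval hm hx s]
    calc ∫ u in Set.Ioi (0:ℝ), kern m x u * u ^ (s - 2)
        = ∫ u in Set.Ioi (0:ℝ), (Set.Ico x m).indicator (fun u => (u - x) * u ^ (s - 2)) u := by
          rw [heq]
      _ = ∫ u in Set.Ioi (0:ℝ) ∩ Set.Ico x m, (u - x) * u ^ (s - 2) :=
          setIntegral_indicator measurableSet_Ico
      _ = ∫ u in Set.Ico x m, (u - x) * u ^ (s - 2) := by
          rw [Set.inter_eq_self_of_subset_right (show Set.Ico x m ⊆ Set.Ioi 0 from fun u hu => lt_of_lt_of_le hx hu.1)]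
      _ = ∫ u in Set.Ioc x m, (u - x) * u ^ (s - 2) := by
          rw [integral_Ico_eq_integral_Ioo, integral_Ioc_eq_integral_Ioo]
      _ = ∫ u in x..m, (u - x) * u ^ (s - 2) := (intervalIntegral.integral_of_le hmx).symm
      _ = -∫ u in m..x, (u - x) * u ^ (s - 2) := intervalIntegral.integral_symm m x
      _ = ∫ u in m..x, (x - u) * u ^ (s - 2) := by
          rw [← intervalIntegral.integral_neg]
          apply intervalIntegral.integral_congr
          intro u hu
          show -((u - x) * u ^ (s - 2)) = (x - u) * u ^ (s - 2)
          ring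

lemma momentLambda_zero {Ω : Type*} [MeasurableSpace Ω] (μ : Measure Ω) (X : Ω → ℝ) :
    momentLambda μ X 0 = Real.log (∫ ω, X ω ∂μ) - ∫ ω, Real.log (X ω) ∂μ := by
  simp [momentLambda]

lemma momentLambda_one {Ω : Type*} [MeasurableSpace Ω] (μ : Measure Ω) (X : Ω → ℝ) :
    momentLambda μ X 1 = (∫ ω, X ω * Real.log (X ω) ∂μ)
      - (∫ ω, X ω ∂μ) * Real.log (∫ ω, X ω ∂μ) := by
  simp [momentLambda]

lemma momentLambda_of_ne {Ω : Type*} [MeasurableSpace Ω] (μ : Measure Ω) (X : Ω → ℝ)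
    {s : ℝ} (h0 : s ≠ 0) (h1 : s ≠ 1) :
    momentLambda μ X s = ((∫ ω, X ω ^ s ∂μ) - (∫ ω, X ω ∂μ) ^ s) / (s * (s - 1)) := by
  simp [momentLambda, h0, h1]

theorem lambda_jensen_lyapunov {Ω : Type*} [MeasurableSpace Ω] (μ : Measure Ω) [IsProbabilityMeasure μ]
    (X : Ω → ℝ) (hX : Measurable X) (hpos : ∀ᵐ ω ∂μ, 0 < X ω)
    (hmom : ∀ s : ℝ, Integrable (fun ω => X ω ^ s) μ)
    (hlog : Integrable (fun ω => Real.log (X ω)) μ)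
    (hxlog : Integrable (fun ω => X ω * Real.log (X ω)) μ)
    (r s t : ℝ) (hrs : r < s) (hst : s < t) :
    momentLambda μ X s ^ (t - r) ≤ momentLambda μ X r ^ (t - s) * momentLambda μ X t ^ (s - r) := by
  have hXint : Integrable X μ := by simpa using hmom 1
  set M := ∫ ω, X ω ∂μ with hM
  have hm : 0 < M := by
    rw [hM, integral_pos_iff_support_of_nonneg_ae (hpos.mono fun ω h => h.le) hXint]
    by_contra hcon
    push_neg at hcon
    have h2 : μ (Function.support X) = 0 := le_antisymm hcon zero_le
    have h3 : ∀ᵐ ω ∂μ, X ω = 0 := by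
      rw [ae_iff]
      exact h2
    obtain ⟨ω, hω1, hω2⟩ := (hpos.and h3).exists
    exact absurd hω2 (ne_of_gt hω1)
  -- integrability of Phi M c ∘ X
  have hphi_int : ∀ c : ℝ, Integrable (fun ω => Phi M c (X ω)) μ := by
    intro c
    by_cases h0 : c = 0
    · subst h0
      simp only [Phi_zero]
      exact ((integrable_const _).sub hlog).add ((hXint.sub (integrable_const _)).div_const _)
    by_cases h1 : c = 1
    · subst h1
      simp only [Phi_one]
      exact (hxlog.sub (hXint.mul_const _)).sub (hXint.sub (integrable_const _))
    · simp only [Phi_of_ne h0 h1]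
      exact (((hmom c).sub (integrable_const _)).sub
        ((hXint.sub (integrable_const _)).const_mul _)).div_const _
  -- momentLambda equals the integral of Phi
  have hML : ∀ c : ℝ, momentLambda μ X c = ∫ ω, Phi M c (X ω) ∂μ := by
    intro c
    by_cases h0 : c = 0
    · subst h0
      rw [momentLambda_zero]
      simp only [Phi_zero]
      have I1 : Integrable (fun ω => Real.log M - Real.log (X ω)) μ :=
        (integrable_const _).sub hlog
      have I2 : Integrable (fun ω => (X ω - M) / M) μ :=
        (hXint.sub (integrable_const _)).div_const _
      have I3 : Integrable (fun ω => X ω - M) μ := hXint.sub (integrable_const _)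
      rw [integral_add I1 I2, integral_sub (integrable_const _) hlog,
        MeasureTheory.integral_div, integral_sub hXint (integrable_const _), MeasureTheory.integral_const]
      simp [← hM]
    by_cases h1 : c = 1
    · subst h1
      rw [momentLambda_one]
      simp only [Phi_one]
      have I1 : Integrable (fun ω => X ω * Real.log (X ω) - X ω * Real.log M) μ :=
        hxlog.sub (hXint.mul_const _)
      have I2 : Integrable (fun ω => X ω - M) μ := hXint.sub (integrable_const _)
      rw [integral_sub I1 I2, integral_sub hxlog (hXint.mul_const _),
        integral_sub hXint (integrable_const _),
        MeasureTheory.integral_mul_const, MeasureTheory.integral_const]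
      simp [← hM]
    · rw [momentLambda_of_ne μ X h0 h1]
      simp only [Phi_of_ne h0 h1]
      have I1 : Integrable (fun ω => X ω ^ c - M ^ c) μ := (hmom c).sub (integrable_const _)
      have I2 : Integrable (fun ω => c * M ^ (c - 1) * (X ω - M)) μ :=
        (hXint.sub (integrable_const _)).const_mul _
      rw [MeasureTheory.integral_div, integral_sub I1 I2,
        integral_sub (hmom c) (integrable_const _), MeasureTheory.integral_const_mul,
        integral_sub hXint (integrable_const _), MeasureTheory.integral_const, MeasureTheory.integral_const]
      simp [← hM]
  have hML_nonneg : ∀ c : ℝ, 0 ≤ momentLambda μ X c := by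
    intro c
    rw [hML c]
    apply MeasureTheory.integral_nonneg_of_ae
    filter_upwards [hpos] with ω hω
    exact Phi_nonneg hm hω c
  -- measurability
  have hkernX : Measurable (fun p : Ω × ℝ => kern M (X p.1) p.2) := by
    unfold kern
    exact (((((hX.comp measurable_fst).sub measurable_snd).max measurable_const).sub
      ((measurable_const.sub measurable_snd).max measurable_const)).sub
      (Measurable.ite (measurable_snd measurableSet_Iio)
        ((hX.comp measurable_fst).sub measurable_const) measurable_const))
  have hker1 : ∀ u : ℝ, Measurable fun ω => ENNReal.ofReal (kern M (X ω) u) := fun u =>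
    ENNReal.measurable_ofReal.comp (hkernX.comp (measurable_id.prodMk measurable_const))
  set W : ℝ → ℝ≥0∞ := fun u => ∫⁻ ω, ENNReal.ofReal (kern M (X ω) u) ∂μ with hWdef
  have hW : Measurable W :=
    Measurable.lintegral_prod_left (ENNReal.measurable_ofReal.comp hkernX)
  -- key identity
  have key : ∀ c : ℝ, ENNReal.ofReal (momentLambda μ X c)
      = ∫⁻ u in Set.Ioi (0:ℝ), (ENNReal.ofReal u) ^ (c - 2) * W u := by
    intro c
    have hjoint : Measurable (fun p : Ω × ℝ => ENNReal.ofReal (kern M (X p.1) p.2 * p.2 ^ (c - 2))) :=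
      ENNReal.measurable_ofReal.comp (hkernX.mul (measurable_snd.pow measurable_const))
    have hphi_nn : 0 ≤ᵐ[μ] fun ω => Phi M c (X ω) := by
      filter_upwards [hpos] with ω hω
      exact Phi_nonneg hm hω c
    rw [hML c, ofReal_integral_eq_lintegral_ofReal (hphi_int c) hphi_nn]
    have step1 : (∫⁻ ω, ENNReal.ofReal (Phi M c (X ω)) ∂μ)
        = ∫⁻ ω, ∫⁻ u in Set.Ioi (0:ℝ), ENNReal.ofReal (kern M (X ω) u * u ^ (c - 2)) ∂volume ∂μ := by
      apply lintegral_congr_ae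
      filter_upwards [hpos] with ω hω
      exact (lintegral_kern hm hω c).symm
    rw [step1, lintegral_lintegral_swap hjoint.aemeasurable]
    apply lintegral_congr_ae
    filter_upwards [ae_restrict_mem measurableSet_Ioi] with u hu
    calc ∫⁻ ω, ENNReal.ofReal (kern M (X ω) u * u ^ (c - 2)) ∂μ
        = ∫⁻ ω, ENNReal.ofReal (kern M (X ω) u) * ENNReal.ofReal u ^ (c - 2) ∂μ := by
          apply lintegral_congr fun ω => ?_
          rw [ENNReal.ofReal_mul (kern_nonneg _ _ _), ENNReal.ofReal_rpow_of_pos hu]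
      _ = W u * ENNReal.ofReal u ^ (c - 2) := lintegral_mul_const _ (hker1 u)
      _ = ENNReal.ofReal u ^ (c - 2) * W u := mul_comm _ _
  -- Hölder
  have htr : (0:ℝ) < t - r := by linarith
  have hts : (0:ℝ) < t - s := by linarith
  have hsr : (0:ℝ) < s - r := by linarith
  set θ₁ : ℝ := (t - s) / (t - r) with hθ₁def
  set θ₂ : ℝ := (s - r) / (t - r) with hθ₂def
  have hθ₁ : 0 < θ₁ := div_pos hts htr
  have hθ₂ : 0 < θ₂ := div_pos hsr htr
  set p : ℝ := (t - r) / (t - s) with hpdef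
  set q : ℝ := (t - r) / (s - r) with hqdef
  have hpq : p.HolderConjugate q := by
    rw [Real.holderConjugate_iff]
    constructor
    · rw [hpdef]
      rw [lt_div_iff₀ hts]
      linarith
    · show p⁻¹ + q⁻¹ = 1
      rw [hpdef, hqdef, inv_div, inv_div, ← add_div, div_eq_one_iff_eq htr.ne']
      ring
  have h1p : 1 / p = θ₁ := by rw [hpdef, one_div_div]
  have h1q : 1 / q = θ₂ := by rw [hqdef, one_div_div]
  set f : ℝ → ℝ≥0∞ := fun u => ((ENNReal.ofReal u) ^ (r - 2) * W u) ^ θ₁ with hfdef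
  set g : ℝ → ℝ≥0∞ := fun u => ((ENNReal.ofReal u) ^ (t - 2) * W u) ^ θ₂ with hgdef
  have hfmeas : Measurable f :=
    ((ENNReal.measurable_ofReal.pow measurable_const).mul hW).pow measurable_const
  have hgmeas : Measurable g :=
    ((ENNReal.measurable_ofReal.pow measurable_const).mul hW).pow measurable_const
  have Hold := ENNReal.lintegral_mul_le_Lp_mul_Lq (volume.restrict (Set.Ioi (0:ℝ))) hpq
    hfmeas.aemeasurable hgmeas.aemeasurable
  -- identify left side
  have hLHS : ∫⁻ u in Set.Ioi (0:ℝ), (f * g) u = ENNReal.ofReal (momentLambda μ X s) := by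
    rw [key s]
    apply lintegral_congr_ae
    filter_upwards [ae_restrict_mem measurableSet_Ioi] with u hu
    have ha0 : (ENNReal.ofReal u) ≠ 0 := (ENNReal.ofReal_pos.mpr hu).ne'
    have hat : (ENNReal.ofReal u) ≠ ⊤ := ENNReal.ofReal_ne_top
    have e1 : (r - 2) * θ₁ + (t - 2) * θ₂ = s - 2 := by
      rw [hθ₁def, hθ₂def]
      field_simp
      ring
    have e2 : θ₁ + θ₂ = 1 := by
      rw [hθ₁def, hθ₂def]
      field_simp
      ring
    show f u * g u = ENNReal.ofReal u ^ (s - 2) * W u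
    rw [hfdef, hgdef]
    simp only []
    rw [ENNReal.mul_rpow_of_nonneg _ _ hθ₁.le, ENNReal.mul_rpow_of_nonneg _ _ hθ₂.le,
      ← ENNReal.rpow_mul, ← ENNReal.rpow_mul, mul_mul_mul_comm,
      ← ENNReal.rpow_add _ _ ha0 hat, ← ENNReal.rpow_add_of_nonneg _ _ hθ₁.le hθ₂.le,
      e1, e2, ENNReal.rpow_one]
  have hfp : ∫⁻ u in Set.Ioi (0:ℝ), f u ^ p = ENNReal.ofReal (momentLambda μ X r) := by
    rw [key r]
    apply lintegral_congr fun u => ?_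
    rw [hfdef]
    simp only []
    rw [← ENNReal.rpow_mul]
    have : θ₁ * p = 1 := by
      rw [hθ₁def, hpdef]
      field_simp
    rw [this, ENNReal.rpow_one]
  have hgq : ∫⁻ u in Set.Ioi (0:ℝ), g u ^ q = ENNReal.ofReal (momentLambda μ X t) := by
    rw [key t]
    apply lintegral_congr fun u => ?_
    rw [hgdef]
    simp only []
    rw [← ENNReal.rpow_mul]
    have : θ₂ * q = 1 := by
      rw [hθ₂def, hqdef]
      field_simp
    rw [this, ENNReal.rpow_one]
  rw [hLHS, hfp, hgq, h1p, h1q,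
    ENNReal.ofReal_rpow_of_nonneg (hML_nonneg r) hθ₁.le,
    ENNReal.ofReal_rpow_of_nonneg (hML_nonneg t) hθ₂.le,
    ← ENNReal.ofReal_mul (Real.rpow_nonneg (hML_nonneg r) _)] at Hold
  have hfin : momentLambda μ X s ≤ momentLambda μ X r ^ θ₁ * momentLambda μ X t ^ θ₂ :=
    (ENNReal.ofReal_le_ofReal_iff
      (mul_nonneg (Real.rpow_nonneg (hML_nonneg r) _) (Real.rpow_nonneg (hML_nonneg t) _))).mp Hold
  calc momentLambda μ X s ^ (t - r)
      ≤ (momentLambda μ X r ^ θ₁ * momentLambda μ X t ^ θ₂) ^ (t - r) :=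
        Real.rpow_le_rpow (hML_nonneg s) hfin htr.le
    _ = (momentLambda μ X r ^ θ₁) ^ (t - r) * (momentLambda μ X t ^ θ₂) ^ (t - r) :=
        Real.mul_rpow (Real.rpow_nonneg (hML_nonneg r) _) (Real.rpow_nonneg (hML_nonneg t) _)
    _ = momentLambda μ X r ^ (t - s) * momentLambda μ X t ^ (s - r) := by
        rw [← Real.rpow_mul (hML_nonneg r), ← Real.rpow_mul (hML_nonneg t),
          hθ₁def, hθ₂def, div_mul_cancel₀ _ htr.ne', div_mul_cancel₀ _ htr.ne']
end

section
/- (Main Lemma) For all real numbers a, b, c, d and all real parameters r, s, u, v, the expression ψ(a,b,c,d) := [a²λ_r + 2ab·λ_{(r+s)/2} + b²λ_s]·[c²λ_u + 2cd·λ_{(u+v)/2} + d²λ_v] − [ac·λ_{(r+u)/2} + ad·λ_{(r+v)/2} + bc·λ_{(s+u)/2} + bd·λ_{(s+v)/2}]² is nonnegative: ψ(a,b,c,d) ≥ 0. -/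
open MeasureTheory

noncomputable def phiAux (p m x : ℝ) : ℝ :=
  if p = 0 then x / m - 1 - Real.log x + Real.log m
  else if p = 1 then x * (Real.log x - Real.log m) - (x - m)
  else (x ^ p - m ^ p - p * m ^ (p - 1) * (x - m)) / (p * (p - 1))

lemma uIcc_pos {m x : ℝ} (hm : 0 < m) (hx : 0 < x) :
    ∀ t ∈ Set.uIcc m x, 0 < t := by
  intro t ht
  rcases Set.mem_uIcc.1 ht with h | h
  · exact lt_of_lt_of_le hm h.1
  · exact lt_of_lt_of_le hx h.1

lemma zero_notMem_uIcc {m x : ℝ} (hm : 0 < m) (hx : 0 < x) :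
    (0 : ℝ) ∉ Set.uIcc m x := fun h => lt_irrefl 0 (uIcc_pos hm hx 0 h)

lemma inner_int (p m x : ℝ) (hm : 0 < m) (hx : 0 < x) :
    (∫ t in m..x, (x - t) * t ^ (p - 2)) = phiAux p m x := by
  have h0 : (0 : ℝ) ∉ Set.uIcc m x := zero_notMem_uIcc hm hx
  have hI1 : IntervalIntegrable (fun t : ℝ => t ^ (p - 2)) volume m x :=
    intervalIntegral.intervalIntegrable_rpow (Or.inr h0)
  have hI2 : IntervalIntegrable (fun t : ℝ => t ^ (p - 1)) volume m x :=
    intervalIntegral.intervalIntegrable_rpow (Or.inr h0)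
  have hsplit : (∫ t in m..x, (x - t) * t ^ (p - 2))
      = x * (∫ t in m..x, t ^ (p - 2)) - ∫ t in m..x, t ^ (p - 1) := by
    rw [← intervalIntegral.integral_const_mul, ← intervalIntegral.integral_sub
      (hI1.const_mul x) hI2]
    apply intervalIntegral.integral_congr
    intro t ht
    have htpos := uIcc_pos hm hx t ht
    have : t ^ (p - 1) = t ^ (p - 2) * t := by
      rw [← Real.rpow_add_one htpos.ne' (p - 2)]; ring_nf
    simp only [this]; ring
  rw [hsplit]
  by_cases hp0 : p = 0
  · subst hp0
    have e1 : (∫ t in m..x, t ^ ((0:ℝ) - 2)) = (x ^ (-1:ℝ) - m ^ (-1:ℝ)) / (-1) := by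
      rw [show (0:ℝ) - 2 = -2 by norm_num, integral_rpow (Or.inr ⟨by norm_num, h0⟩)]
      norm_num
    have e2 : (∫ t in m..x, t ^ ((0:ℝ) - 1)) = Real.log x - Real.log m := by
      have : (∫ t in m..x, t ^ ((0:ℝ) - 1)) = ∫ t in m..x, 1 / t := by
        apply intervalIntegral.integral_congr
        intro t ht
        show t ^ ((0:ℝ) - 1) = 1 / t
        rw [show (0:ℝ) - 1 = -1 by norm_num, Real.rpow_neg_one, one_div]
      rw [this, integral_one_div h0, Real.log_div hx.ne' hm.ne']
    rw [e1, e2, phiAux]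
    rw [if_pos rfl]
    rw [Real.rpow_neg_one, Real.rpow_neg_one]
    field_simp
    ring
  by_cases hp1 : p = 1
  · subst hp1
    have e1 : (∫ t in (m:ℝ)..x, t ^ ((1:ℝ) - 2)) = Real.log x - Real.log m := by
      have : (∫ t in (m:ℝ)..x, t ^ ((1:ℝ) - 2)) = ∫ t in m..x, 1 / t := by
        apply intervalIntegral.integral_congr
        intro t ht
        show t ^ ((1:ℝ) - 2) = 1 / t
        rw [show (1:ℝ) - 2 = -1 by norm_num, Real.rpow_neg_one, one_div]
      rw [this, integral_one_div h0, Real.log_div hx.ne' hm.ne']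
    have e2 : (∫ t in (m:ℝ)..x, t ^ ((1:ℝ) - 1)) = x - m := by
      have : (∫ t in (m:ℝ)..x, t ^ ((1:ℝ) - 1)) = ∫ t in m..x, (1:ℝ) := by
        apply intervalIntegral.integral_congr
        intro t ht
        show t ^ ((1:ℝ) - 1) = (1:ℝ)
        rw [show (1:ℝ) - 1 = 0 by norm_num, Real.rpow_zero]
      rw [this]; simp
    rw [e1, e2, phiAux]
    rw [if_neg one_ne_zero, if_pos rfl]
  · have e1 : (∫ t in m..x, t ^ (p - 2)) = (x ^ (p - 1) - m ^ (p - 1)) / (p - 1) := by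
      rw [integral_rpow (Or.inr ⟨by intro h; apply hp1; linarith [sub_eq_iff_eq_add.1 h], h0⟩)]
      ring_nf
    have e2 : (∫ t in m..x, t ^ (p - 1)) = (x ^ p - m ^ p) / p := by
      rw [integral_rpow (Or.inr ⟨by intro h; apply hp0; linarith [sub_eq_iff_eq_add.1 h], h0⟩)]
      ring_nf
    have hxp : x ^ p = x ^ (p - 1) * x := by
      rw [← Real.rpow_add_one hx.ne' (p - 1)]; ring_nf
    have hmp : m ^ p = m ^ (p - 1) * m := by
      rw [← Real.rpow_add_one hm.ne' (p - 1)]; ring_nf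
    rw [e1, e2, phiAux, if_neg hp0, if_neg hp1, hxp, hmp]
    have hp1' : p - 1 ≠ 0 := sub_ne_zero.2 hp1
    field_simp
    ring

section Meas
variable {Ω : Type*} [MeasurableSpace Ω] (μ : Measure Ω) [IsProbabilityMeasure μ]
  (X : Ω → ℝ)

lemma phi_integrable
    (hmom : ∀ s : ℝ, Integrable (fun ω => X ω ^ s) μ)
    (hlog : Integrable (fun ω => Real.log (X ω)) μ)
    (hxlog : Integrable (fun ω => X ω * Real.log (X ω)) μ)
    (q : ℝ) :
    Integrable (fun ω => phiAux q (∫ x, X x ∂μ) (X ω)) μ := by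
  have hXint : Integrable X μ := by
    have := hmom 1
    simpa [Real.rpow_one] using this
  set m := ∫ x, X x ∂μ with hmdef
  by_cases hq0 : q = 0
  · subst hq0
    have : Integrable (fun ω => X ω / m - 1 - Real.log (X ω) + Real.log m) μ :=
      (((hXint.div_const m).sub (integrable_const 1)).sub hlog).add (integrable_const _)
    exact this.congr (Filter.Eventually.of_forall fun ω => by simp [phiAux])
  by_cases hq1 : q = 1
  · subst hq1
    have : Integrable (fun ω => X ω * Real.log (X ω) - Real.log m * X ω - (X ω - m)) μ :=
      (hxlog.sub (hXint.const_mul _)).sub (hXint.sub (integrable_const m))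
    exact this.congr (Filter.Eventually.of_forall fun ω => by
      norm_num [phiAux]; ring)
  · have : Integrable
        (fun ω => (X ω ^ q - m ^ q - q * m ^ (q - 1) * (X ω - m)) / (q * (q - 1))) μ :=
      (((hmom q).sub (integrable_const _)).sub
        ((hXint.sub (integrable_const m)).const_mul _)).div_const _
    exact this.congr (Filter.Eventually.of_forall fun ω => by
      simp only [phiAux]; rw [if_neg hq0, if_neg hq1])

lemma lambda_eq
    (hmom : ∀ s : ℝ, Integrable (fun ω => X ω ^ s) μ)
    (hlog : Integrable (fun ω => Real.log (X ω)) μ)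
    (hxlog : Integrable (fun ω => X ω * Real.log (X ω)) μ)
    (hm : (∫ x, X x ∂μ) ≠ 0)
    (q : ℝ) :
    momentLambda μ X q = ∫ ω, phiAux q (∫ x, X x ∂μ) (X ω) ∂μ := by
  have hXint : Integrable X μ := by
    have := hmom 1
    simpa [Real.rpow_one] using this
  set m := ∫ x, X x ∂μ with hmdef
  by_cases hq0 : q = 0
  · subst hq0
    have e : (∫ ω, phiAux 0 m (X ω) ∂μ)
        = ∫ ω, (X ω / m - 1 - Real.log (X ω) + Real.log m) ∂μ := by
      apply integral_congr_ae
      exact Filter.Eventually.of_forall fun ω => by simp [phiAux]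
    have i1 : Integrable (fun ω => X ω / m) μ := hXint.div_const m
    have i2 : Integrable (fun ω => X ω / m - 1) μ := i1.sub (integrable_const 1)
    have i3 : Integrable (fun ω => X ω / m - 1 - Real.log (X ω)) μ := i2.sub hlog
    rw [momentLambda, if_pos rfl, e, integral_add i3 (integrable_const _),
      integral_sub i2 hlog, integral_sub i1 (integrable_const 1), integral_div, integral_const]
    simp [← hmdef, div_self hm]
    ring
  by_cases hq1 : q = 1
  · subst hq1
    have e : (∫ ω, phiAux 1 m (X ω) ∂μ)
        = ∫ ω, (X ω * Real.log (X ω) - Real.log m * X ω - (X ω - m)) ∂μ := by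
      apply integral_congr_ae
      exact Filter.Eventually.of_forall fun ω => by
        norm_num [phiAux]; ring
    have j1 : Integrable (fun ω => Real.log m * X ω) μ := hXint.const_mul _
    have j2 : Integrable (fun ω => X ω * Real.log (X ω) - Real.log m * X ω) μ := hxlog.sub j1
    have j3 : Integrable (fun ω => X ω - m) μ := hXint.sub (integrable_const m)
    rw [momentLambda, if_neg one_ne_zero, if_pos rfl, e, integral_sub j2 j3,
      integral_sub hxlog j1, integral_sub hXint (integrable_const m),
      integral_const_mul, integral_const]
    simp [← hmdef]
    ring
  · have e : (∫ ω, phiAux q m (X ω) ∂μ)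
        = ∫ ω, ((X ω ^ q - m ^ q - q * m ^ (q - 1) * (X ω - m)) / (q * (q - 1))) ∂μ := by
      apply integral_congr_ae
      exact Filter.Eventually.of_forall fun ω => by
        simp only [phiAux]; rw [if_neg hq0, if_neg hq1]
    have k1 : Integrable (fun ω => X ω ^ q - m ^ q) μ := (hmom q).sub (integrable_const _)
    have k2 : Integrable (fun ω => q * m ^ (q - 1) * (X ω - m)) μ :=
      (hXint.sub (integrable_const m)).const_mul _
    rw [momentLambda, if_neg hq0, if_neg hq1, e, integral_div, integral_sub k1 k2,
      integral_sub (hmom q) (integrable_const _), integral_const_mul,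
      integral_sub hXint (integrable_const m), integral_const]
    simp [← hmdef]

end Meas

lemma pointwise_nonneg (m x : ℝ) (hm : 0 < m) (hx : 0 < x) (c p : Fin 4 → ℝ) :
    0 ≤ ∑ i : Fin 4, ∑ j : Fin 4, c i * c j * phiAux ((p i + p j) / 2) m x := by
  have hcont : ∀ q : ℝ, ContinuousOn (fun t : ℝ => (x - t) * t ^ (q - 2)) (Set.uIcc m x) := by
    intro q
    apply ContinuousOn.mul (continuousOn_const.sub continuousOn_id)
    intro t ht
    exact (Real.continuousAt_rpow_const t _ (Or.inl (uIcc_pos hm hx t ht).ne')).continuousWithinAt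
  have hint : ∀ q : ℝ, IntervalIntegrable (fun t => (x - t) * t ^ (q - 2)) volume m x :=
    fun q => (hcont q).intervalIntegrable
  have hrepr : ∀ i j : Fin 4, c i * c j * phiAux ((p i + p j) / 2) m x
      = ∫ t in m..x, c i * c j * ((x - t) * t ^ ((p i + p j) / 2 - 2)) := by
    intro i j
    rw [← inner_int _ _ _ hm hx, intervalIntegral.integral_const_mul]
  have heq : (∑ i : Fin 4, ∑ j : Fin 4, c i * c j * phiAux ((p i + p j) / 2) m x)
      = ∫ t in m..x, (x - t) * (∑ i : Fin 4, c i * t ^ (p i / 2 - 1)) ^ 2 := by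
    calc (∑ i : Fin 4, ∑ j : Fin 4, c i * c j * phiAux ((p i + p j) / 2) m x)
        = ∑ i : Fin 4, ∫ t in m..x,
            ∑ j : Fin 4, c i * c j * ((x - t) * t ^ ((p i + p j) / 2 - 2)) := by
          refine Finset.sum_congr rfl fun i _ => ?_
          rw [intervalIntegral.integral_finset_sum fun j _ => (hint _).const_mul _]
          exact Finset.sum_congr rfl fun j _ => hrepr i j
      _ = ∫ t in m..x,
            ∑ i : Fin 4, ∑ j : Fin 4, c i * c j * ((x - t) * t ^ ((p i + p j) / 2 - 2)) := by
          have hi : ∀ i : Fin 4, IntervalIntegrable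
              (fun t => ∑ j : Fin 4, c i * c j * ((x - t) * t ^ ((p i + p j) / 2 - 2)))
              volume m x := fun i =>
            (continuousOn_finset_sum _ fun j _ =>
              continuousOn_const.mul (hcont ((p i + p j) / 2))).intervalIntegrable
          exact (intervalIntegral.integral_finset_sum fun i _ => hi i).symm
      _ = ∫ t in m..x, (x - t) * (∑ i : Fin 4, c i * t ^ (p i / 2 - 1)) ^ 2 := by
          apply intervalIntegral.integral_congr
          intro t ht
          have ht0 : 0 < t := uIcc_pos hm hx t ht
          dsimp only
          rw [sq, Finset.sum_mul_sum, Finset.mul_sum]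
          refine Finset.sum_congr rfl fun i _ => ?_
          rw [Finset.mul_sum]
          refine Finset.sum_congr rfl fun j _ => ?_
          rw [show (p i + p j) / 2 - 2 = p i / 2 - 1 + (p j / 2 - 1) by ring,
            Real.rpow_add ht0]
          ring
  rw [heq]
  rcases le_total m x with h | h
  · apply intervalIntegral.integral_nonneg h
    intro t ht
    exact mul_nonneg (sub_nonneg.2 ht.2) (sq_nonneg _)
  · rw [intervalIntegral.integral_symm]
    have h1 : (∫ t in x..m, (x - t) * (∑ i : Fin 4, c i * t ^ (p i / 2 - 1)) ^ 2)
        = - ∫ t in x..m, (t - x) * (∑ i : Fin 4, c i * t ^ (p i / 2 - 1)) ^ 2 := by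
      rw [← intervalIntegral.integral_neg]
      congr 1
      funext t
      ring
    have h2 : 0 ≤ ∫ t in x..m, (t - x) * (∑ i : Fin 4, c i * t ^ (p i / 2 - 1)) ^ 2 :=
      intervalIntegral.integral_nonneg h fun t ht =>
        mul_nonneg (sub_nonneg.2 ht.1) (sq_nonneg _)
    rw [h1]
    linarith

lemma quad_nonneg {Ω : Type*} [MeasurableSpace Ω] (μ : Measure Ω) [IsProbabilityMeasure μ]
    (X : Ω → ℝ) (hX : Measurable X) (hpos : ∀ᵐ ω ∂μ, 0 < X ω)
    (hmom : ∀ s : ℝ, Integrable (fun ω => X ω ^ s) μ)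
    (hlog : Integrable (fun ω => Real.log (X ω)) μ)
    (hxlog : Integrable (fun ω => X ω * Real.log (X ω)) μ)
    (c p : Fin 4 → ℝ) :
    0 ≤ ∑ i : Fin 4, ∑ j : Fin 4, c i * c j * momentLambda μ X ((p i + p j) / 2) := by
  have hXint : Integrable X μ := by simpa [Real.rpow_one] using hmom 1
  have hm : 0 < ∫ x, X x ∂μ := by
    rw [integral_pos_iff_support_of_nonneg_ae (hpos.mono fun ω h => h.le) hXint]
    have hms : MeasurableSet {ω | 0 < X ω} := measurableSet_lt measurable_const hX
    have h0 : μ {ω | 0 < X ω}ᶜ = 0 := by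
      rw [ae_iff] at hpos
      simpa [Set.compl_setOf] using hpos
    have h1 : μ {ω | 0 < X ω} = 1 := by
      have := measure_add_measure_compl (μ := μ) hms
      rw [h0, add_zero] at this
      simpa using this
    refine lt_of_lt_of_le ?_
      (measure_mono (s := {ω | 0 < X ω}) (t := Function.support X) fun ω h => ne_of_gt h)
    rw [h1]; norm_num
  set m := ∫ x, X x ∂μ with hmdef
  have hInt : ∀ q : ℝ, Integrable (fun ω => phiAux q m (X ω)) μ :=
    phi_integrable μ X hmom hlog hxlog
  have step : (∑ i : Fin 4, ∑ j : Fin 4, c i * c j * momentLambda μ X ((p i + p j) / 2))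
      = ∫ ω, ∑ i : Fin 4, ∑ j : Fin 4, c i * c j * phiAux ((p i + p j) / 2) m (X ω) ∂μ := by
    have hi : ∀ i : Fin 4, Integrable
        (fun ω => ∑ j : Fin 4, c i * c j * phiAux ((p i + p j) / 2) m (X ω)) μ :=
      fun i => integrable_finset_sum _ fun j _ => (hInt _).const_mul _
    calc (∑ i : Fin 4, ∑ j : Fin 4, c i * c j * momentLambda μ X ((p i + p j) / 2))
        = ∑ i : Fin 4, ∑ j : Fin 4,
            ∫ ω, c i * c j * phiAux ((p i + p j) / 2) m (X ω) ∂μ := by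
          refine Finset.sum_congr rfl fun i _ => Finset.sum_congr rfl fun j _ => ?_
          rw [lambda_eq μ X hmom hlog hxlog hm.ne' _, ← integral_const_mul]
      _ = ∑ i : Fin 4, ∫ ω, ∑ j : Fin 4,
            c i * c j * phiAux ((p i + p j) / 2) m (X ω) ∂μ := by
          refine Finset.sum_congr rfl fun i _ => ?_
          exact (integral_finset_sum _ fun j _ => (hInt _).const_mul (c i * c j)).symm
      _ = _ := (integral_finset_sum _ fun i _ => hi i).symm
  rw [step]
  exact integral_nonneg_of_ae (hpos.mono fun ω hω => pointwise_nonneg m (X ω) hm hω c p)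

theorem main_lemma_psi_nonneg {Ω : Type*} [MeasurableSpace Ω] (μ : Measure Ω) [IsProbabilityMeasure μ]
    (X : Ω → ℝ) (hX : Measurable X) (hpos : ∀ᵐ ω ∂μ, 0 < X ω)
    (hmom : ∀ s : ℝ, Integrable (fun ω => X ω ^ s) μ)
    (hlog : Integrable (fun ω => Real.log (X ω)) μ)
    (hxlog : Integrable (fun ω => X ω * Real.log (X ω)) μ)
    (a b c d r s u v : ℝ) :
    (a ^ 2 * momentLambda μ X (r) + 2 * a * b * momentLambda μ X ((r + s) / 2) + b ^ 2 * momentLambda μ X (s)) *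
        (c ^ 2 * momentLambda μ X (u) + 2 * c * d * momentLambda μ X ((u + v) / 2) + d ^ 2 * momentLambda μ X (v)) -
      (a * c * momentLambda μ X ((r + u) / 2) + a * d * momentLambda μ X ((r + v) / 2) +
        b * c * momentLambda μ X ((s + u) / 2) + b * d * momentLambda μ X ((s + v) / 2)) ^ 2 ≥ 0 := by
  set A := a ^ 2 * momentLambda μ X (r) + 2 * a * b * momentLambda μ X ((r + s) / 2) +
    b ^ 2 * momentLambda μ X (s) with hA
  set C := c ^ 2 * momentLambda μ X (u) + 2 * c * d * momentLambda μ X ((u + v) / 2) +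
    d ^ 2 * momentLambda μ X (v) with hC
  set B := a * c * momentLambda μ X ((r + u) / 2) + a * d * momentLambda μ X ((r + v) / 2) +
    b * c * momentLambda μ X ((s + u) / 2) + b * d * momentLambda μ X ((s + v) / 2) with hB
  have key : ∀ t : ℝ, 0 ≤ A * (t * t) + (2 * B) * t + C := by
    intro t
    have h := quad_nonneg μ X hX hpos hmom hlog hxlog ![t * a, t * b, c, d] ![r, s, u, v]
    simp only [Fin.sum_univ_four, Matrix.cons_val_zero, Matrix.cons_val_one, Matrix.head_cons,
      Matrix.cons_val_two, Matrix.tail_cons, Matrix.cons_val_three] at h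
    rw [show (r + r) / 2 = r from by ring, show (s + s) / 2 = s from by ring,
      show (u + u) / 2 = u from by ring, show (v + v) / 2 = v from by ring,
      show (s + r) / 2 = (r + s) / 2 from by ring, show (u + r) / 2 = (r + u) / 2 from by ring,
      show (v + r) / 2 = (r + v) / 2 from by ring, show (u + s) / 2 = (s + u) / 2 from by ring,
      show (v + s) / 2 = (s + v) / 2 from by ring,
      show (v + u) / 2 = (u + v) / 2 from by ring] at h
    calc (0:ℝ) ≤ _ := h
      _ = A * (t * t) + (2 * B) * t + C := by rw [hA, hB, hC]; ring
  have hd := discrim_le_zero key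
  rw [discrim] at hd
  nlinarith [hd]
end

section
/- (Corollary 1) For every fixed real number a, the function μ_a(t) := λ_t − 2λ_{t+a/2} + λ_{t+a} is log-convex in t; in particular, for all real t and u, μ_a(t)·μ_a(u) ≥ (μ_a((t+u)/2))². -/
open MeasureTheory

/-- `μ_a(t) := λ_t - 2λ_{t+a/2} + λ_{t+a}`. -/
noncomputable def momentMu {Ω : Type*} [MeasurableSpace Ω] (μ : Measure Ω) (X : Ω → ℝ)
    (a t : ℝ) : ℝ :=
  momentLambda μ X t - 2 * momentLambda μ X (t + a / 2) + momentLambda μ X (t + a)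

open Set
open scoped ENNReal

noncomputable def hfun (m s x : ℝ) : ℝ :=
  if s = 0 then x / m - 1 - Real.log x + Real.log m
  else if s = 1 then x * Real.log x - x * Real.log m - (x - m)
  else (x ^ s - m ^ s - s * m ^ (s - 1) * (x - m)) / (s * (s - 1))

lemma uIcc_pos_s5 {m x : ℝ} (hm : 0 < m) (hx : 0 < x) {y : ℝ} (hy : y ∈ uIcc m x) : 0 < y :=
  lt_of_lt_of_le (lt_min hm hx) hy.1

lemma contOn {m x : ℝ} (hm : 0 < m) (hx : 0 < x) (c : ℝ) :
    ContinuousOn (fun y : ℝ => (x - y) * y ^ c) (uIcc m x) := by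
  apply ContinuousOn.mul
  · exact (continuous_const.sub continuous_id).continuousOn
  · exact continuousOn_id.rpow_const fun y hy => Or.inl (ne_of_gt (uIcc_pos_s5 hm hx hy))

lemma stepA {m x : ℝ} (hm : 0 < m) (hx : 0 < x) (s : ℝ) :
    (∫ y in m..x, (x - y) * y ^ (s - 2)) = hfun m s x := by
  have hii : IntervalIntegrable (fun y : ℝ => (x - y) * y ^ (s - 2)) volume m x :=
    (contOn hm hx (s - 2)).intervalIntegrable
  rcases eq_or_ne s 0 with rfl | hs0
  · have key : ∀ y ∈ uIcc m x,
        HasDerivAt (fun y : ℝ => -x / y - Real.log y) ((x - y) * y ^ ((0:ℝ) - 2)) y := by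
      intro y hy
      have hy0 : 0 < y := uIcc_pos_s5 hm hx hy
      have h1 : HasDerivAt (fun y : ℝ => -x / y) (x / y ^ 2) y := by
        have := (hasDerivAt_inv (ne_of_gt hy0)).const_mul (-x)
        simpa [div_eq_mul_inv, neg_mul, mul_comm] using this.congr_deriv (by ring)
      have h2 := Real.hasDerivAt_log (ne_of_gt hy0)
      have := h1.sub h2
      refine this.congr_deriv ?_
      rw [show ((0:ℝ) - 2) = ((-2 : ℤ) : ℝ) by norm_num, Real.rpow_intCast,
        zpow_neg, show ((2:ℤ)) = ((2:ℕ):ℤ) by norm_num, zpow_natCast]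
      field_simp
    rw [intervalIntegral.integral_eq_sub_of_hasDerivAt key hii]
    simp only [hfun, if_pos rfl, eq_self_iff_true, if_true]
    field_simp
    ring
  rcases eq_or_ne s 1 with rfl | hs1
  · have key : ∀ y ∈ uIcc m x,
        HasDerivAt (fun y : ℝ => x * Real.log y - y) ((x - y) * y ^ ((1:ℝ) - 2)) y := by
      intro y hy
      have hy0 : 0 < y := uIcc_pos_s5 hm hx hy
      have h1 := ((Real.hasDerivAt_log (ne_of_gt hy0)).const_mul x).sub (hasDerivAt_id y)
      refine h1.congr_deriv ?_
      rw [show ((1:ℝ) - 2) = ((-1 : ℤ) : ℝ) by norm_num, Real.rpow_intCast]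
      field_simp
    rw [intervalIntegral.integral_eq_sub_of_hasDerivAt key hii]
    norm_num [hfun]
    ring
  · have key : ∀ y ∈ uIcc m x,
        HasDerivAt (fun y : ℝ => x * y ^ (s - 1) / (s - 1) - y ^ s / s)
          ((x - y) * y ^ (s - 2)) y := by
      intro y hy
      have hy0 : 0 < y := uIcc_pos_s5 hm hx hy
      have hs1' : s - 1 ≠ 0 := sub_ne_zero.2 hs1
      have hys1 : y ^ (s - 1) = y ^ s / y := by
        rw [Real.rpow_sub hy0, Real.rpow_one]
      have hys2 : y ^ (s - 2) = y ^ (s - 1) / y := by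
        rw [show s - 2 = s - 1 - 1 by ring, Real.rpow_sub hy0, Real.rpow_one]
      have h1 : HasDerivAt (fun y : ℝ => y ^ (s - 1)) ((s - 1) * y ^ (s - 1 - 1)) y :=
        Real.hasDerivAt_rpow_const (Or.inl (ne_of_gt hy0))
      have h2 : HasDerivAt (fun y : ℝ => y ^ s) (s * y ^ (s - 1)) y :=
        Real.hasDerivAt_rpow_const (Or.inl (ne_of_gt hy0))
      have h3 := ((h1.const_mul x).div_const (s - 1)).sub (h2.div_const s)
      refine h3.congr_deriv ?_
      rw [show s - 1 - 1 = s - 2 by ring, hys2, hys1]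
      field_simp
    rw [intervalIntegral.integral_eq_sub_of_hasDerivAt key hii]
    simp only [hfun, if_neg hs0, if_neg hs1]
    have hs1' : s - 1 ≠ 0 := sub_ne_zero.2 hs1
    have hxs : x ^ (s - 1) = x ^ s / x := by rw [Real.rpow_sub hx, Real.rpow_one]
    have hms : m ^ (s - 1) = m ^ s / m := by rw [Real.rpow_sub hm, Real.rpow_one]
    rw [hxs, hms]
    field_simp
    ring

noncomputable def kfun (m x y : ℝ) : ℝ :=
  if m ≤ y then max (x - y) 0 else max (y - x) 0

lemma kfun_nonneg (m x y : ℝ) : 0 ≤ kfun m x y := by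
  unfold kfun; split <;> exact le_max_right _ _

lemma kfun_eq_indicator_le {m x : ℝ} (h : m ≤ x) (y : ℝ) (c : ℝ) :
    kfun m x y * y ^ c = Set.indicator (Icc m x) (fun y => (x - y) * y ^ c) y := by
  unfold kfun
  rcases le_or_gt m y with h1 | h1
  · rcases le_or_gt y x with h2 | h2
    · rw [if_pos h1, Set.indicator_of_mem (Set.mem_Icc.mpr ⟨h1, h2⟩), max_eq_left (by linarith)]
    · rw [if_pos h1, Set.indicator_of_notMem (fun hc => absurd (Set.mem_Icc.mp hc).2 (not_le.2 h2)),
        max_eq_right (by linarith), zero_mul]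
  · rw [if_neg (not_le.2 h1), Set.indicator_of_notMem (fun hc => absurd (Set.mem_Icc.mp hc).1 (not_le.2 h1)),
      max_eq_right (by linarith), zero_mul]

lemma kfun_eq_indicator_lt {m x : ℝ} (h : x < m) (y : ℝ) (c : ℝ) :
    kfun m x y * y ^ c = Set.indicator (Ico x m) (fun y => (y - x) * y ^ c) y := by
  unfold kfun
  rcases le_or_gt m y with h1 | h1
  · rw [if_pos h1, Set.indicator_of_notMem (fun hc => absurd (Set.mem_Ico.mp hc).2 (not_lt.2 h1)),
      max_eq_right (by linarith), zero_mul]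
  · rcases le_or_gt x y with h2 | h2
    · rw [if_neg (not_le.2 h1), Set.indicator_of_mem (Set.mem_Ico.mpr ⟨h2, h1⟩), max_eq_left (by linarith)]
    · rw [if_neg (not_le.2 h1), Set.indicator_of_notMem (fun hc => absurd (Set.mem_Ico.mp hc).1 (not_le.2 h2)),
        max_eq_right (by linarith), zero_mul]

lemma stepB_int {m x : ℝ} (hm : 0 < m) (hx : 0 < x) (s : ℝ) :
    IntegrableOn (fun y => kfun m x y * y ^ (s - 2)) (Ioi (0:ℝ)) volume := by
  rcases le_or_gt m x with h | h
  · have hco : ContinuousOn (fun y : ℝ => (x - y) * y ^ (s - 2)) (Icc m x) := by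
      have := contOn hm hx (s - 2); rwa [uIcc_of_le h] at this
    have hint : IntegrableOn (fun y : ℝ => (x - y) * y ^ (s - 2)) (Icc m x) volume :=
      hco.integrableOn_Icc
    rw [show (fun y => kfun m x y * y ^ (s - 2)) =
        Set.indicator (Icc m x) (fun y : ℝ => (x - y) * y ^ (s - 2)) from
        funext fun y => kfun_eq_indicator_le h y (s - 2)]
    exact (hint.integrable_indicator measurableSet_Icc).integrableOn
  · have hco : ContinuousOn (fun y : ℝ => (y - x) * y ^ (s - 2)) (Icc x m) := by
      have hc2 := contOn hx hm (s - 2)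
      rw [uIcc_of_le h.le] at hc2
      have : ContinuousOn (fun y : ℝ => -((m - y) * y ^ (s - 2)) + (m - x) * y ^ (s - 2))
          (Icc x m) := by
        refine (hc2.neg).add (ContinuousOn.mul continuousOn_const ?_)
        exact continuousOn_id.rpow_const fun y hy =>
          Or.inl (ne_of_gt (lt_of_lt_of_le hx (Set.mem_Icc.mp hy).1))
      exact this.congr fun y _ => by ring
    have hint : IntegrableOn (fun y : ℝ => (y - x) * y ^ (s - 2)) (Ico x m) volume :=
      (hco.integrableOn_Icc).mono_set Set.Ico_subset_Icc_self
    rw [show (fun y => kfun m x y * y ^ (s - 2)) =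
        Set.indicator (Ico x m) (fun y : ℝ => (y - x) * y ^ (s - 2)) from
        funext fun y => kfun_eq_indicator_lt h y (s - 2)]
    exact (hint.integrable_indicator measurableSet_Ico).integrableOn

lemma stepB {m x : ℝ} (hm : 0 < m) (hx : 0 < x) (s : ℝ) :
    (∫ y in Ioi (0:ℝ), kfun m x y * y ^ (s - 2)) = ∫ y in m..x, (x - y) * y ^ (s - 2) := by
  rcases le_or_gt m x with h | h
  · have hsub : Icc m x ⊆ Ioi (0:ℝ) := fun y hy => lt_of_lt_of_le hm (Set.mem_Icc.mp hy).1
    rw [show (fun y => kfun m x y * y ^ (s - 2)) =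
        Set.indicator (Icc m x) (fun y : ℝ => (x - y) * y ^ (s - 2)) from
        funext fun y => kfun_eq_indicator_le h y (s - 2)]
    rw [MeasureTheory.integral_indicator measurableSet_Icc,
      Measure.restrict_restrict measurableSet_Icc, Set.inter_eq_self_of_subset_left hsub,
      integral_Icc_eq_integral_Ioc, ← intervalIntegral.integral_of_le h]
  · have hsub : Ico x m ⊆ Ioi (0:ℝ) := fun y hy => lt_of_lt_of_le hx (Set.mem_Ico.mp hy).1
    rw [show (fun y => kfun m x y * y ^ (s - 2)) =
        Set.indicator (Ico x m) (fun y : ℝ => (y - x) * y ^ (s - 2)) from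
        funext fun y => kfun_eq_indicator_lt h y (s - 2)]
    rw [MeasureTheory.integral_indicator measurableSet_Ico,
      Measure.restrict_restrict measurableSet_Ico, Set.inter_eq_self_of_subset_left hsub,
      integral_Ico_eq_integral_Ioo, ← integral_Ioc_eq_integral_Ioo,
      ← intervalIntegral.integral_of_le h.le]
    rw [show (fun y : ℝ => (y - x) * y ^ (s - 2)) =
        (fun y : ℝ => -((x - y) * y ^ (s - 2))) from funext fun y => by ring]
    rw [intervalIntegral.integral_neg, ← intervalIntegral.integral_symm]

lemma hfun_nonneg {m x : ℝ} (hm : 0 < m) (hx : 0 < x) (s : ℝ) : 0 ≤ hfun m s x := by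
  rw [← stepA hm hx s, ← stepB hm hx s]
  refine setIntegral_nonneg measurableSet_Ioi fun y hy => ?_
  exact mul_nonneg (kfun_nonneg _ _ _) (Real.rpow_nonneg (le_of_lt hy) _)

section Main
variable {Ω : Type*} [MeasurableSpace Ω] {μ : Measure Ω} [IsProbabilityMeasure μ]
  {X : Ω → ℝ}

lemma intX (hmom : ∀ s : ℝ, Integrable (fun ω => X ω ^ s) μ) : Integrable X μ := by
  simpa [Real.rpow_one] using hmom 1

lemma mpos (hpos : ∀ᵐ ω ∂μ, 0 < X ω) (hmom : ∀ s : ℝ, Integrable (fun ω => X ω ^ s) μ) :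
    0 < ∫ ω, X ω ∂μ := by
  rw [integral_pos_iff_support_of_nonneg_ae (hpos.mono fun ω h => h.le) (intX hmom)]
  have : ∀ᵐ ω ∂μ, ω ∈ Function.support X := hpos.mono fun ω h => ne_of_gt h
  have h1 : μ (Function.support X)ᶜ = 0 := by
    rwa [Filter.eventually_iff, mem_ae_iff] at this
  by_contra hc
  push_neg at hc
  have h0 : μ (Function.support X) = 0 := le_antisymm (le_of_not_gt (by simpa using hc)) bot_le
  have := measure_univ (μ := μ)
  rw [← Set.union_compl_self (Function.support X)] at this
  have hle := measure_union_le (μ := μ) (Function.support X) (Function.support X)ᶜ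
  rw [h0, h1, this] at hle
  simp at hle

lemma hfun_integrable (hmom : ∀ s : ℝ, Integrable (fun ω => X ω ^ s) μ)
    (hlog : Integrable (fun ω => Real.log (X ω)) μ)
    (hxlog : Integrable (fun ω => X ω * Real.log (X ω)) μ) (m s : ℝ) :
    Integrable (fun ω => hfun m s (X ω)) μ := by
  have hX : Integrable X μ := intX hmom
  unfold hfun
  rcases eq_or_ne s 0 with rfl | hs0
  · simp only [if_pos rfl]
    exact (((hX.div_const m).sub (integrable_const 1)).sub hlog).add (integrable_const _)
  rcases eq_or_ne s 1 with rfl | hs1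
  · simp only [if_neg hs0, if_pos rfl]
    exact (hxlog.sub (hX.mul_const _)).sub (hX.sub (integrable_const m))
  · simp only [if_neg hs0, if_neg hs1]
    exact (((hmom s).sub (integrable_const _)).sub ((hX.sub (integrable_const m)).const_mul _)).div_const _

lemma stepC (hmom : ∀ s : ℝ, Integrable (fun ω => X ω ^ s) μ)
    (hlog : Integrable (fun ω => Real.log (X ω)) μ)
    (hxlog : Integrable (fun ω => X ω * Real.log (X ω)) μ)
    (hm : 0 < ∫ ω, X ω ∂μ) (s : ℝ) :
    momentLambda μ X s = ∫ ω, hfun (∫ ω', X ω' ∂μ) s (X ω) ∂μ := by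
  have hX : Integrable X μ := intX hmom
  set m := ∫ ω', X ω' ∂μ with hmdef
  unfold momentLambda hfun
  rcases eq_or_ne s 0 with rfl | hs0
  · norm_num only
    simp only [if_true, if_false]
    have h1 : Integrable (fun ω => X ω / m - 1) μ := (hX.div_const m).sub (integrable_const 1)
    have h2 : Integrable (fun ω => X ω / m - 1 - Real.log (X ω)) μ := h1.sub hlog
    rw [integral_add h2 (integrable_const (Real.log m)), integral_sub h1 hlog,
      integral_sub (hX.div_const m) (integrable_const 1), integral_div, integral_const,
      integral_const]
    simp only [measure_univ, probReal_univ, one_smul, smul_eq_mul]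
    rw [← hmdef, div_self (ne_of_gt hm)]
    ring
  rcases eq_or_ne s 1 with rfl | hs1
  · norm_num only
    simp only [if_true, if_false]
    have h1 : Integrable (fun ω => X ω * Real.log (X ω) - X ω * Real.log m) μ :=
      hxlog.sub (hX.mul_const _)
    have h2 : Integrable (fun ω => X ω - m) μ := hX.sub (integrable_const m)
    rw [integral_sub h1 h2, integral_sub hxlog (hX.mul_const _), integral_sub hX (integrable_const m),
      integral_mul_const, integral_const]
    simp only [measure_univ, probReal_univ, one_smul, smul_eq_mul]
    rw [← hmdef]
    ring
  · simp only [if_neg hs0, if_neg hs1]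
    have h2 : Integrable (fun ω => X ω - m) μ := hX.sub (integrable_const m)
    have h3 : Integrable (fun ω => s * m ^ (s - 1) * (X ω - m)) μ := h2.const_mul _
    have h4 : Integrable (fun ω => X ω ^ s - m ^ s) μ := (hmom s).sub (integrable_const _)
    rw [integral_div, integral_sub h4 h3, integral_sub (hmom s) (integrable_const _),
      integral_const_mul, integral_sub hX (integrable_const m), integral_const, integral_const]
    simp only [measure_univ, probReal_univ, one_smul, smul_eq_mul]
    rw [← hmdef]
    ring

end Main


theorem corollary1 {Ω : Type*} [MeasurableSpace Ω] (μ : Measure Ω) [IsProbabilityMeasure μ]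
    (X : Ω → ℝ) (hX : Measurable X) (hpos : ∀ᵐ ω ∂μ, 0 < X ω)
    (hmom : ∀ s : ℝ, Integrable (fun ω => X ω ^ s) μ)
    (hlog : Integrable (fun ω => Real.log (X ω)) μ)
    (hxlog : Integrable (fun ω => X ω * Real.log (X ω)) μ)
    (a : ℝ) (t u : ℝ) :
    momentMu μ X a t * momentMu μ X a u ≥ (momentMu μ X a ((t + u) / 2)) ^ 2 := by
  set m := ∫ ω, X ω ∂μ with hmdef
  have hm : 0 < m := mpos hpos hmom
  set ν : Measure ℝ := (volume : Measure ℝ).restrict (Ioi (0:ℝ)) with hν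
  set P : Measure (Ω × ℝ) := μ.prod ν with hP
  have measK : Measurable fun p : Ω × ℝ => kfun m (X p.1) p.2 := by
    unfold kfun
    exact Measurable.ite (measurableSet_le measurable_const measurable_snd)
      (((hX.comp measurable_fst).sub measurable_snd).max measurable_const)
      ((measurable_snd.sub (hX.comp measurable_fst)).max measurable_const)
  have measP : ∀ c : ℝ, Measurable fun p : Ω × ℝ => p.2 ^ c := fun c => by measurability
  set F : ℝ → Ω × ℝ → ℝ≥0∞ :=
    fun s p => ENNReal.ofReal (kfun m (X p.1) p.2 * p.2 ^ (s - 2)) with hF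
  have measF : ∀ s, Measurable (F s) := fun s => (measK.mul (measP _)).ennreal_ofReal
  have hLnn : ∀ s, 0 ≤ momentLambda μ X s := by
    intro s
    rw [stepC hmom hlog hxlog hm s]
    exact integral_nonneg_of_ae (hpos.mono fun ω hω => hfun_nonneg hm hω s)
  have hD : ∀ s : ℝ, ∫⁻ p, F s p ∂P = ENNReal.ofReal (momentLambda μ X s) := by
    intro s
    rw [hP, lintegral_prod _ (measF s).aemeasurable]
    have inner : ∀ᵐ ω ∂μ, (∫⁻ y, F s (ω, y) ∂ν) = ENNReal.ofReal (hfun m s (X ω)) := by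
      filter_upwards [hpos] with ω hω
      have hnn : 0 ≤ᵐ[ν] fun y => kfun m (X ω) y * y ^ (s - 2) := by
        rw [hν]
        refine (ae_restrict_iff' measurableSet_Ioi).2 (Filter.Eventually.of_forall fun y hy => ?_)
        exact mul_nonneg (kfun_nonneg _ _ _) (Real.rpow_nonneg (le_of_lt hy) _)
      have key := ofReal_integral_eq_lintegral_ofReal (μ := ν) (stepB_int hm hω s) hnn
      simp only [hF]
      rw [← key]
      have : (∫ y, kfun m (X ω) y * y ^ (s - 2) ∂ν) = ∫ y in Ioi (0:ℝ), kfun m (X ω) y * y ^ (s - 2) := by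
        rw [hν]
      rw [this, stepB hm hω s, stepA hm hω s]
    rw [lintegral_congr_ae inner,
      ← ofReal_integral_eq_lintegral_ofReal (hfun_integrable hmom hlog hxlog m s)
        (hpos.mono fun ω hω => hfun_nonneg hm hω s),
      stepC hmom hlog hxlog hm s]
  set G : ℝ → Ω × ℝ → ℝ≥0∞ := fun r p =>
    ENNReal.ofReal (kfun m (X p.1) p.2 * p.2 ^ (r - 2) * (1 - p.2 ^ (a / 2)) ^ 2) with hG
  have measG : ∀ r, Measurable (G r) := fun r =>
    ((measK.mul (measP _)).mul ((measurable_const.sub (measP _)).pow_const 2)).ennreal_ofReal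
  have hy_pos : ∀ᵐ p ∂P, 0 < p.2 := by
    rw [ae_iff]
    have hset : {p : Ω × ℝ | ¬ 0 < p.2} = (univ : Set Ω) ×ˢ Iic (0:ℝ) := by
      ext ⟨ω, y⟩; simp [not_lt]
    rw [hset, hP, Measure.prod_prod, hν, Measure.restrict_apply measurableSet_Iic]
    have : Iic (0:ℝ) ∩ Ioi 0 = ∅ := by
      ext y; simp only [mem_inter_iff, mem_Iic, mem_Ioi, mem_empty_iff_false, iff_false, not_and,
        not_lt]
      intro h; exact h
    rw [this]
    simp
  have hEq : ∀ r : ℝ, ∀ᵐ p ∂P, G r p + 2 * F (r + a / 2) p = F r p + F (r + a) p := by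
    intro r
    filter_upwards [hy_pos] with p hp
    have hk := kfun_nonneg m (X p.1) p.2
    have hynn : (0:ℝ) ≤ p.2 := hp.le
    have h1 : p.2 ^ (r - 2) * p.2 ^ (a / 2) = p.2 ^ (r + a / 2 - 2) := by
      rw [← Real.rpow_add hp]; ring_nf
    have h2 : p.2 ^ (r - 2) * (p.2 ^ (a / 2) * p.2 ^ (a / 2)) = p.2 ^ (r + a - 2) := by
      rw [← Real.rpow_add hp, ← Real.rpow_add hp]; ring_nf
    have e1 : kfun m (X p.1) p.2 * p.2 ^ (r - 2) * (1 - p.2 ^ (a / 2)) ^ 2 +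
        2 * (kfun m (X p.1) p.2 * p.2 ^ (r + a / 2 - 2)) =
        kfun m (X p.1) p.2 * p.2 ^ (r - 2) + kfun m (X p.1) p.2 * p.2 ^ (r + a - 2) := by
      linear_combination kfun m (X p.1) p.2 * h2 - 2 * kfun m (X p.1) p.2 * h1
    simp only [hG, hF]
    rw [show (2:ℝ≥0∞) = ENNReal.ofReal 2 by norm_num,
      ← ENNReal.ofReal_mul (by norm_num : (0:ℝ) ≤ 2),
      ← ENNReal.ofReal_add
        (mul_nonneg (mul_nonneg hk (Real.rpow_nonneg hynn _)) (sq_nonneg _))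
        (by positivity),
      ← ENNReal.ofReal_add (mul_nonneg hk (Real.rpow_nonneg hynn _))
        (mul_nonneg hk (Real.rpow_nonneg hynn _)), e1]
  have hFfin : ∀ s, ∫⁻ p, F s p ∂P ≠ ⊤ := fun s => by rw [hD s]; exact ENNReal.ofReal_ne_top
  have hEint : ∀ r, ∫⁻ p, G r p ∂P + 2 * ∫⁻ p, F (r + a / 2) p ∂P =
      ∫⁻ p, F r p ∂P + ∫⁻ p, F (r + a) p ∂P := by
    intro r
    calc ∫⁻ p, G r p ∂P + 2 * ∫⁻ p, F (r + a / 2) p ∂P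
        = ∫⁻ p, (G r p + 2 * F (r + a / 2) p) ∂P := by
          rw [lintegral_add_left (measG r), lintegral_const_mul 2 (measF _)]
      _ = ∫⁻ p, (F r p + F (r + a) p) ∂P := lintegral_congr_ae (hEq r)
      _ = _ := lintegral_add_left (measF r) _
  have hGfin : ∀ r, ∫⁻ p, G r p ∂P ≠ ⊤ := by
    intro r
    refine ne_top_of_le_ne_top (ENNReal.add_ne_top.2 ⟨hFfin r, hFfin (r + a)⟩) ?_
    calc ∫⁻ p, G r p ∂P ≤ ∫⁻ p, G r p ∂P + 2 * ∫⁻ p, F (r + a / 2) p ∂P := le_self_add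
      _ = _ := hEint r
  have hGval : ∀ r, (∫⁻ p, G r p ∂P).toReal = momentMu μ X a r := by
    intro r
    have h := congrArg ENNReal.toReal (hEint r)
    rw [ENNReal.toReal_add (hGfin r) (ENNReal.mul_ne_top (by norm_num) (hFfin _)),
      ENNReal.toReal_add (hFfin r) (hFfin _), ENNReal.toReal_mul, hD, hD, hD,
      ENNReal.toReal_ofReal (hLnn _), ENNReal.toReal_ofReal (hLnn _),
      ENNReal.toReal_ofReal (hLnn _), ENNReal.toReal_ofNat] at h
    unfold momentMu
    linarith
  set Φ : ℝ → Ω × ℝ → ℝ≥0∞ := fun r p =>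
    ENNReal.ofReal (Real.sqrt (kfun m (X p.1) p.2) * p.2 ^ ((r - 2) / 2) * |1 - p.2 ^ (a / 2)|)
    with hΦ
  have measΦ : ∀ r, Measurable (Φ r) := fun r =>
    (((Real.continuous_sqrt.measurable.comp measK).mul (measP _)).mul
      ((measurable_const.sub (measP _)).abs)).ennreal_ofReal
  have hΦnn : ∀ r : ℝ, ∀ p : Ω × ℝ, 0 < p.2 →
      0 ≤ Real.sqrt (kfun m (X p.1) p.2) * p.2 ^ ((r - 2) / 2) * |1 - p.2 ^ (a / 2)| := by
    intro r p hp
    exact mul_nonneg (mul_nonneg (Real.sqrt_nonneg _) (Real.rpow_nonneg hp.le _)) (abs_nonneg _)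
  have hΦsq : ∀ r, ∀ᵐ p ∂P, Φ r p ^ (2:ℝ) = G r p := by
    intro r
    filter_upwards [hy_pos] with p hp
    have hk := kfun_nonneg m (X p.1) p.2
    simp only [hΦ, hG]
    rw [ENNReal.ofReal_rpow_of_nonneg (hΦnn r p hp) (by norm_num)]
    congr 1
    rw [show (2:ℝ) = ((2:ℕ):ℝ) by norm_num, Real.rpow_natCast, mul_pow, mul_pow,
      Real.sq_sqrt hk, sq_abs]
    push_cast
    rw [← Real.rpow_natCast (p.2 ^ ((r - 2) / 2)) 2, ← Real.rpow_mul hp.le]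
    norm_num
  have hΦmul : ∀ᵐ p ∂P, Φ t p * Φ u p = G ((t + u) / 2) p := by
    filter_upwards [hy_pos] with p hp
    have hk := kfun_nonneg m (X p.1) p.2
    simp only [hΦ, hG]
    rw [← ENNReal.ofReal_mul (hΦnn t p hp)]
    congr 1
    have h1 : Real.sqrt (kfun m (X p.1) p.2) * Real.sqrt (kfun m (X p.1) p.2) =
        kfun m (X p.1) p.2 := Real.mul_self_sqrt hk
    have h2 : p.2 ^ ((t - 2) / 2) * p.2 ^ ((u - 2) / 2) = p.2 ^ ((t + u) / 2 - 2) := by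
      rw [← Real.rpow_add hp]; ring_nf
    have h3 : |1 - p.2 ^ (a / 2)| * |1 - p.2 ^ (a / 2)| = (1 - p.2 ^ (a / 2)) ^ 2 := by
      rw [abs_mul_abs_self]; ring
    calc Real.sqrt (kfun m (X p.1) p.2) * p.2 ^ ((t - 2) / 2) * |1 - p.2 ^ (a / 2)| *
          (Real.sqrt (kfun m (X p.1) p.2) * p.2 ^ ((u - 2) / 2) * |1 - p.2 ^ (a / 2)|)
        = (Real.sqrt (kfun m (X p.1) p.2) * Real.sqrt (kfun m (X p.1) p.2)) *
          (p.2 ^ ((t - 2) / 2) * p.2 ^ ((u - 2) / 2)) *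
          (|1 - p.2 ^ (a / 2)| * |1 - p.2 ^ (a / 2)|) := by ring
      _ = _ := by rw [h1, h2, h3]
  have hpq : Real.HolderConjugate 2 2 := Real.HolderConjugate.two_two
  have hCS := ENNReal.lintegral_mul_le_Lp_mul_Lq P hpq (measΦ t).aemeasurable (measΦ u).aemeasurable
  simp only [Pi.mul_apply] at hCS
  rw [lintegral_congr_ae hΦmul, lintegral_congr_ae (hΦsq t), lintegral_congr_ae (hΦsq u)] at hCS
  have hfin2 : ((∫⁻ p, G t p ∂P) ^ (1/2:ℝ) * (∫⁻ p, G u p ∂P) ^ (1/2:ℝ)) ≠ ⊤ :=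
    ENNReal.mul_ne_top (ENNReal.rpow_ne_top_of_nonneg (by norm_num) (hGfin t))
      (ENNReal.rpow_ne_top_of_nonneg (by norm_num) (hGfin u))
  have hfinal := ENNReal.toReal_mono hfin2 hCS
  rw [ENNReal.toReal_mul, ← ENNReal.toReal_rpow, ← ENNReal.toReal_rpow,
    ← Real.sqrt_eq_rpow, ← Real.sqrt_eq_rpow, hGval, hGval, hGval] at hfinal
  have hAnn : 0 ≤ momentMu μ X a t := by rw [← hGval t]; exact ENNReal.toReal_nonneg
  have hBnn : 0 ≤ momentMu μ X a u := by rw [← hGval u]; exact ENNReal.toReal_nonneg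
  have hCnn : 0 ≤ momentMu μ X a ((t + u) / 2) := by rw [← hGval]; exact ENNReal.toReal_nonneg
  nlinarith [Real.sq_sqrt hAnn, Real.sq_sqrt hBnn, Real.sqrt_nonneg (momentMu μ X a t),
    Real.sqrt_nonneg (momentMu μ X a u), mul_self_le_mul_self hCnn hfinal]
end
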